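/- arXiv:1311.2774 — 3 statements merged into one kernel-verified Lean document; each statement's English description precedes it below -/
import Mathlib

section
/- Let p be a prime, R a perfect 𝔽_p-algebra, and A a commutative ring equipped with a decreasing sequence of ideals 𝔞₁ ⊇ 𝔞₂ ⊇ … such that 𝔞_i·𝔞_j ⊆ 𝔞_{i+j} for all i, j ≥ 1, such that the canonical map A → lim_ν A/𝔞_ν is bijective, together with a surjective ring homomorphism π_A : A → R with kernel 𝔞₁ (so A is a p-ring with perfect residue algebra R). Then there exists a unique ring homomorphism α̂ : C(R) → A with π_A ∘ α̂ = π̄, where π̄ : C(R) → R is the canonical projection induced by π. -/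
set_option synthInstance.maxHeartbeats 1000000
set_option maxHeartbeats 1000000

open MonoidAlgebra

/-- `ℤR`: the monoid algebra over `ℤ` of the multiplicative monoid `(R, ·)`. -/
abbrev ZR (R : Type*) [CommRing R] : Type _ := MonoidAlgebra ℤ R

/-- The canonical ring homomorphism `π : ℤR → R`, `Σ n_r [r] ↦ Σ n_r r`. -/
noncomputable def piHom (R : Type*) [CommRing R] : ZR R →+* R :=
  (MonoidAlgebra.lift ℤ R R (MonoidHom.id R)).toRingHom

/-- The ideal `I = ker (π : ℤR → R)`. -/
noncomputable def Iid (R : Type*) [CommRing R] : Ideal (ZR R) := RingHom.ker (piHom R)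

/-- The inverse limit `lim_ν A⧸I^ν` realized as a subring of the product `Π ν, A⧸I^ν`
(families compatible under the canonical factor maps). -/
def Clim (A : Type*) [CommRing A] (I : Ideal A) : Subring (Π ν : ℕ, A ⧸ I ^ ν) where
  carrier := { x | ∀ ⦃m ν : ℕ⦄ (h : m ≤ ν),
    Ideal.Quotient.factor (Ideal.pow_le_pow_right h) (x ν) = x m }
  zero_mem' := by intro m ν h; simp
  one_mem' := by intro m ν h; simp
  add_mem' := by intro x y hx hy m ν h; simp only [Pi.add_apply, map_add, hx h, hy h]
  mul_mem' := by intro x y hx hy m ν h; simp only [Pi.mul_apply, map_mul, hx h, hy h]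
  neg_mem' := by intro x hx m ν h; simp only [Pi.neg_apply, map_neg, hx h]

/-- The projection of the completion `lim_ν A⧸I^ν` onto its `ν`-th level `A⧸I^ν`. -/
def Ceval (A : Type*) [CommRing A] (I : Ideal A) (ν : ℕ) : Clim A I →+* A ⧸ I ^ ν :=
  (Pi.evalRingHom _ ν).comp (Clim A I).subtype

/-- The canonical map `A → lim_ν A⧸I^ν`. -/
def CofRingHom (A : Type*) [CommRing A] (I : Ideal A) : A →+* Clim A I where
  toFun a := ⟨fun ν => Ideal.Quotient.mk _ a, fun _ _ _ => Ideal.Quotient.factor_mk _ _⟩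
  map_one' := rfl
  map_mul' _ _ := rfl
  map_zero' := rfl
  map_add' _ _ := rfl

/-- `C(R)`: the `I`-adic completion of `ℤR`. -/
noncomputable abbrev CR (R : Type*) [CommRing R] : Type _ := Clim (ZR R) (Iid R)

/-- The canonical projection `π̄ : C(R) → R` induced by `π`. -/
noncomputable def CtoR (R : Type*) [CommRing R] : CR R →+* R :=
  (Ideal.Quotient.lift (Iid R) (piHom R) (fun _ ha => ha)).comp
    (((Ideal.quotEquivOfEq (pow_one (Iid R))).toRingHom).comp (Ceval (ZR R) (Iid R) 1))

section IdealAux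

variable {S : Type*} [CommRing S]

lemma st12_add_pow_le_left (X Y : Ideal S) : ∀ a : ℕ, (X + Y) ^ a ≤ X + Y ^ a
  | 0 => by simp
  | (a+1) => by
      calc (X + Y) ^ (a+1) = (X + Y) ^ a * (X + Y) := pow_succ _ _
        _ ≤ (X + Y ^ a) * (X + Y) := Ideal.mul_mono_left (st12_add_pow_le_left X Y a)
        _ = X * (X + Y) + (Y ^ a * X + Y ^ a * Y) := by rw [add_mul]; ring_nf
        _ ≤ X + Y ^ (a+1) := by
            rw [Ideal.add_eq_sup, Ideal.add_eq_sup, Ideal.add_eq_sup]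
            refine sup_le (Ideal.mul_le_left.trans le_sup_left) (sup_le
              (Ideal.mul_le_right.trans le_sup_left) ?_)
            rw [← pow_succ]; exact le_sup_right

lemma st12_add_pow_le_right (X Y : Ideal S) : ∀ a : ℕ, (X + Y) ^ a ≤ X ^ a + Y
  | 0 => by simp
  | (a+1) => by
      calc (X + Y) ^ (a+1) = (X + Y) ^ a * (X + Y) := pow_succ _ _
        _ ≤ (X ^ a + Y) * (X + Y) := Ideal.mul_mono_left (st12_add_pow_le_right X Y a)
        _ = (X ^ a * X + X ^ a * Y) + Y * (X + Y) := by rw [add_mul]; ring_nf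
        _ ≤ X ^ (a+1) + Y := by
            rw [Ideal.add_eq_sup, Ideal.add_eq_sup, Ideal.add_eq_sup]
            refine sup_le (sup_le ?_ (Ideal.mul_le_right.trans le_sup_right))
              (Ideal.mul_le_left.trans le_sup_right)
            rw [← pow_succ]; exact le_sup_left

/-- `(x+y)^p - x^p - y^p` lies in the ideal generated by `p*x`. -/
lemma st12_binom {p : ℕ} (hp : p.Prime) (x y : S) :
    (x + y) ^ p - x ^ p - y ^ p ∈ Ideal.span {(p : S) * x} := by
  have h := add_pow_prime_eq hp x y
  have h2 : (x + y) ^ p - x ^ p - y ^ p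
      = ∑ k ∈ Finset.Ioo 0 p, (p : S) * (x ^ k * y ^ (p - k) * ((p.choose k / p : ℕ) : S)) := by
    have h' : (x + y) ^ p - x ^ p - y ^ p = (p : S) * x * y * ∑ k ∈ Finset.Ioo 0 p,
        x ^ (k - 1) * y ^ (p - k - 1) * ((p.choose k / p : ℕ) : S) := by rw [h]; ring
    rw [h', Finset.mul_sum]
    refine Finset.sum_congr rfl (fun k hk => ?_)
    obtain ⟨hk1, hk2⟩ := Finset.mem_Ioo.mp hk
    have e1 : x ^ k = x * x ^ (k - 1) := by rw [← pow_succ']; congr 1; omega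
    have e2 : y ^ (p - k) = y * y ^ (p - k - 1) := by rw [← pow_succ']; congr 1; omega
    rw [e1, e2]; ring
  rw [h2]
  refine Ideal.sum_mem _ (fun k hk => ?_)
  obtain ⟨k', rfl⟩ : ∃ k', k = k' + 1 := by
    have := (Finset.mem_Ioo.mp hk).1; exact ⟨k - 1, by omega⟩
  have h3 : (p : S) * (x ^ (k' + 1) * y ^ (p - (k' + 1)) * ((p.choose (k' + 1) / p : ℕ) : S))
      = ((p : S) * x) * (x ^ k' * y ^ (p - (k' + 1)) * ((p.choose (k' + 1) / p : ℕ) : S)) := by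
    ring
  rw [h3]
  exact Ideal.mul_mem_right _ _ (Ideal.subset_span rfl)

end IdealAux

section ZRAux

variable {R : Type*} [CommRing R]

lemma st12_piHom_of (r : R) : piHom R (of ℤ R r) = r := by
  simp [piHom]

lemma st12_hom_ext {B : Type*} [CommRing B] {f g : ZR R →+* B}
    (h : ∀ r : R, f (of ℤ R r) = g (of ℤ R r)) : f = g := by
  refine MonoidAlgebra.ringHom_ext (fun b => ?_) (fun a => h a)
  have hb : (MonoidAlgebra.single (1 : R) (b : ℤ) : ZR R) = b • (1 : ZR R) := by
    rw [MonoidAlgebra.one_def, MonoidAlgebra.smul_single']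
    norm_num
  rw [hb, map_zsmul, map_zsmul, map_one, map_one]

/-- `I` is contained in the ideal generated by the "additivity defects". -/
lemma st12_Iid_le_span :
    Iid R ≤ Ideal.span ({of ℤ R 0} ∪
      {z | ∃ x y : R, z = of ℤ R (x + y) - of ℤ R x - of ℤ R y}) := by
  set Sg : Set (ZR R) := {of ℤ R 0} ∪
      {z | ∃ x y : R, z = of ℤ R (x + y) - of ℤ R x - of ℤ R y} with hSg
  intro z hz
  have h0 : Ideal.Quotient.mk (Ideal.span Sg) (of ℤ R 0) = 0 :=
    Ideal.Quotient.eq_zero_iff_mem.mpr (Ideal.subset_span (Or.inl rfl))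
  have hadd : ∀ x y : R, Ideal.Quotient.mk (Ideal.span Sg) (of ℤ R (x + y))
      = Ideal.Quotient.mk (Ideal.span Sg) (of ℤ R x)
        + Ideal.Quotient.mk (Ideal.span Sg) (of ℤ R y) := by
    intro x y
    have : (of ℤ R (x + y) - of ℤ R x - of ℤ R y) ∈ Ideal.span Sg :=
      Ideal.subset_span (Or.inr ⟨x, y, rfl⟩)
    have h' := Ideal.Quotient.eq_zero_iff_mem.mpr this
    rw [map_sub, map_sub, sub_sub, sub_eq_zero] at h'
    exact h'
  let σ : R →+* ZR R ⧸ Ideal.span Sg :=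
    { toFun := fun r => Ideal.Quotient.mk (Ideal.span Sg) (of ℤ R r)
      map_one' := by show Ideal.Quotient.mk (Ideal.span Sg) (of ℤ R 1) = 1
                     rw [map_one, map_one]
      map_mul' := by intro x y
                     show Ideal.Quotient.mk (Ideal.span Sg) (of ℤ R (x * y)) = _
                     rw [map_mul, map_mul]
      map_zero' := h0
      map_add' := hadd }
  have key : Ideal.Quotient.mk (Ideal.span Sg) = σ.comp (piHom R) := by
    refine st12_hom_ext (fun r => ?_)
    show Ideal.Quotient.mk (Ideal.span Sg) (of ℤ R r)
        = Ideal.Quotient.mk (Ideal.span Sg) (of ℤ R (piHom R (of ℤ R r)))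
    rw [st12_piHom_of]
  have : Ideal.Quotient.mk (Ideal.span Sg) z = 0 := by
    rw [key]
    simp only [RingHom.comp_apply]
    have hz0 : piHom R z = 0 := hz
    rw [hz0, map_zero]
  exact Ideal.Quotient.eq_zero_iff_mem.mp this

lemma st12_p_mem {p : ℕ} [CharP R p] : ((p : ℕ) : ZR R) ∈ Iid R := by
  have : piHom R ((p : ℕ) : ZR R) = ((p : ℕ) : R) := map_natCast _ _
  simp only [Iid, RingHom.mem_ker, this, CharP.cast_eq_zero]

end ZRAux
section Frob

variable (p : ℕ) [Fact p.Prime] (R : Type*) [CommRing R] [CharP R p]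

lemma st12_frob (hperf : Function.Bijective fun x : R => x ^ p) :
    Iid R ≤ (Iid R) ^ p + Ideal.span {(p : ZR R)} := by
  have hp : p.Prime := Fact.out
  refine (st12_Iid_le_span (R := R)).trans (Ideal.span_le.mpr ?_)
  rintro z (rfl | ⟨x, y, rfl⟩)
  · have h1 : of ℤ R 0 ∈ Iid R := RingHom.mem_ker.mpr (st12_piHom_of 0)
    have h2 : (of ℤ R 0) ^ p = of ℤ R 0 := by
      rw [← map_pow, zero_pow hp.ne_zero]
    exact Submodule.mem_sup_left (h2 ▸ Ideal.pow_mem_pow h1 p)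
  · obtain ⟨u, hu⟩ := hperf.2 x
    obtain ⟨v, hv⟩ := hperf.2 y
    simp only at hu hv
    set h := of ℤ R (u + v) - of ℤ R u - of ℤ R v with hdef
    have hI : h ∈ Iid R := by
      refine RingHom.mem_ker.mpr ?_
      rw [hdef, map_sub, map_sub, st12_piHom_of, st12_piHom_of, st12_piHom_of]
      ring
    have e3 : of ℤ R u + of ℤ R v + h = of ℤ R (u + v) := by rw [hdef]; ring
    obtain ⟨c1, hc1⟩ := exists_add_pow_prime_eq hp (of ℤ R u + of ℤ R v) h
    obtain ⟨c2, hc2⟩ := exists_add_pow_prime_eq hp (of ℤ R u) (of ℤ R v)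
    have e4 : (of ℤ R (u + v)) ^ p = of ℤ R (x + y) := by
      rw [← map_pow, add_pow_char, hu, hv]
    have key : of ℤ R (x + y) - of ℤ R x - of ℤ R y = h ^ p + (p : ZR R) * ((of ℤ R u + of ℤ R v) * h * c1 + of ℤ R u * of ℤ R v * c2) := by
      have e5 : of ℤ R (x + y) = (of ℤ R u + of ℤ R v) ^ p + h ^ p
          + (p : ZR R) * ((of ℤ R u + of ℤ R v) * h * c1) := by
        rw [← e4, ← e3, hc1]; ring
      have e6 : (of ℤ R u + of ℤ R v) ^ p = of ℤ R x + of ℤ R y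
          + (p : ZR R) * (of ℤ R u * of ℤ R v * c2) := by
        rw [hc2, ← map_pow, ← map_pow, hu, hv]; ring
      rw [e5, e6]; ring
    rw [key]
    exact Submodule.add_mem_sup (Ideal.pow_mem_pow hI p)
      (Ideal.mul_mem_right _ _ (Ideal.subset_span rfl))

lemma st12_L0 (hperf : Function.Bijective fun x : R => x ^ p) (ν : ℕ) :
    Iid R ≤ (Iid R) ^ ν + Ideal.span {(p : ZR R)} := by
  have hp : p.Prime := Fact.out
  have hk : ∀ k : ℕ, Iid R ≤ (Iid R) ^ (p ^ k) + Ideal.span {(p : ZR R)} := by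
    intro k; induction k with
    | zero =>
        rw [pow_zero, pow_one, Ideal.add_eq_sup]
        exact le_sup_left
    | succ k ih =>
        have h1 : (Iid R) ^ (p ^ k) ≤ (Iid R) ^ (p ^ (k+1)) + Ideal.span {(p : ZR R)} := by
          have hmono := Ideal.pow_right_mono (st12_frob p R hperf) (p ^ k)
          refine hmono.trans ((st12_add_pow_le_right _ _ (p ^ k)).trans ?_)
          rw [← pow_mul, ← pow_succ']
        refine ih.trans ?_
        rw [Ideal.add_eq_sup, Ideal.add_eq_sup]
        refine sup_le (h1.trans ?_) le_sup_right
        rw [Ideal.add_eq_sup]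
  refine (hk ν).trans ?_
  rw [Ideal.add_eq_sup, Ideal.add_eq_sup]
  refine sup_le ((Ideal.pow_le_pow_right (le_of_lt (Nat.lt_pow_self (n := ν) hp.one_lt))).trans
    le_sup_left) le_sup_right

lemma st12_L1 (hperf : Function.Bijective fun x : R => x ^ p) (a ν : ℕ) :
    (Iid R) ^ a ≤ (Iid R) ^ ν + Ideal.span {((p : ZR R)) ^ a} := by
  have h1 : (Iid R) ^ a ≤ ((Iid R) ^ ν + Ideal.span {(p : ZR R)}) ^ a :=
    Ideal.pow_right_mono (st12_L0 p R hperf ν) a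
  have h2 : ((Iid R) ^ ν + Ideal.span {(p : ZR R)}) ^ a
      ≤ (Iid R) ^ ν + Ideal.span {(p : ZR R)} ^ a :=
    st12_add_pow_le_left ((Iid R) ^ ν) (Ideal.span {(p : ZR R)}) a
  refine (h1.trans h2).trans ?_
  rw [Ideal.span_singleton_pow]

lemma st12_ker_eval (hperf : Function.Bijective fun x : R => x ^ p) (n : ℕ) (x : CR R)
    (hx : (x : Π ν : ℕ, ZR R ⧸ (Iid R) ^ ν) n = 0) :
    ∃ w : CR R, x = (p : CR R) ^ n * w := by
  classical
  have hcomp : ∀ (y : CR R) (m ν : ℕ) (h : m ≤ ν),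
      Ideal.Quotient.factor (Ideal.pow_le_pow_right h)
        ((y : Π ν : ℕ, ZR R ⧸ (Iid R) ^ ν) ν) = (y : Π ν : ℕ, ZR R ⧸ (Iid R) ^ ν) m :=
    fun y m ν h => y.2 h
  set ι := CofRingHom (ZR R) (Iid R) with hι
  have hιp : ∀ (k : ℕ) (z : ZR R),
      (p : CR R) ^ k * ι z = ι ((p : ZR R) ^ k * z) := by
    intro k z; rw [map_mul, map_pow, map_natCast]
  set P : ℕ → ZR R → Prop := fun K σ =>
    ((x - (p : CR R) ^ n * ι σ : CR R) : Π ν : ℕ, ZR R ⧸ (Iid R) ^ ν) (n + K) = 0 with hP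
  have hbase : P 0 0 := by
    show ((x - (p : CR R) ^ n * ι 0 : CR R) : Π ν : ℕ, ZR R ⧸ (Iid R) ^ ν) (n + 0) = 0
    rw [map_zero, mul_zero, sub_zero]
    simpa using hx
  have hstep : ∀ (K : ℕ) (σ : ZR R), P K σ → ∃ σ' : ZR R,
      (σ' - σ ∈ (Iid R) ^ K) ∧ P (K+1) σ' := by
    intro K σ hK
    set t : CR R := x - (p : CR R) ^ n * ι σ with ht
    obtain ⟨h, hh⟩ := Ideal.Quotient.mk_surjective
      ((t : Π ν : ℕ, ZR R ⧸ (Iid R) ^ ν) (n+K+1))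
    have hmem : h ∈ (Iid R) ^ (n+K) := by
      have h2 := hcomp t (n+K) (n+K+1) (Nat.le_succ _)
      rw [← hh, Ideal.Quotient.factor_mk] at h2
      rw [← Ideal.Quotient.eq_zero_iff_mem, h2]
      exact hK
    obtain ⟨q, hq, z, hz, hqz⟩ :=
      Submodule.mem_sup.mp (st12_L1 p R hperf (n+K) (n+K+1) hmem)
    obtain ⟨s, hs⟩ := Ideal.mem_span_singleton'.mp hz
    refine ⟨σ + (p : ZR R) ^ K * s, ?_, ?_⟩
    · simpa [add_sub_cancel_left] using
        Ideal.mul_mem_right s _ (Ideal.pow_mem_pow (st12_p_mem (p := p)) K)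
    · have e1 : (x - (p : CR R) ^ n * ι (σ + (p : ZR R) ^ K * s) : CR R)
          = t - ι ((p : ZR R) ^ (n+K) * s) := by
        have e0 : (p : ZR R) ^ n * ((p : ZR R) ^ K * s) = (p : ZR R) ^ (n+K) * s := by
          rw [← mul_assoc, ← pow_add]
        rw [ht, map_add, mul_add, hιp n ((p : ZR R) ^ K * s), e0]
        ring
      show ((x - (p : CR R) ^ n * ι (σ + (p : ZR R) ^ K * s) : CR R) :
        Π ν : ℕ, ZR R ⧸ (Iid R) ^ ν) (n + K + 1) = 0
      rw [e1]
      have e2 : ((t - ι ((p : ZR R) ^ (n+K) * s) : CR R) :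
          Π ν : ℕ, ZR R ⧸ (Iid R) ^ ν) (n+K+1)
          = (t : Π ν : ℕ, ZR R ⧸ (Iid R) ^ ν) (n+K+1)
            - Ideal.Quotient.mk ((Iid R) ^ (n+K+1)) ((p : ZR R) ^ (n+K) * s) := rfl
      rw [e2, ← hh, ← map_sub, Ideal.Quotient.eq_zero_iff_mem]
      have : h - (p : ZR R) ^ (n+K) * s = q := by
        rw [← hqz, ← hs]; ring
      rw [this]
      exact hq
  choose f hf1 hf2 using hstep
  let G : ∀ K : ℕ, {σ : ZR R // P K σ} := fun K =>
    Nat.rec ⟨0, hbase⟩ (fun K ih => ⟨f K ih.1 ih.2, hf2 K ih.1 ih.2⟩) K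
  have hGsucc : ∀ K, (G (K+1)).1 - (G K).1 ∈ (Iid R) ^ K := fun K => hf1 K (G K).1 (G K).2
  have hGdiff : ∀ K d, (G (K+d)).1 - (G K).1 ∈ (Iid R) ^ K := by
    intro K d; induction d with
    | zero => simpa using ((Iid R) ^ K).zero_mem
    | succ d ih =>
        have h1 := hGsucc (K+d)
        have h2 : (Iid R) ^ (K+d) ≤ (Iid R) ^ K := Ideal.pow_le_pow_right (Nat.le_add_right _ _)
        have h3 := Submodule.add_mem _ (h2 h1) ih
        have e : ((G (K+d+1)).1 - (G (K+d)).1) + ((G (K+d)).1 - (G K).1)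
            = (G (K+(d+1))).1 - (G K).1 := by
          rw [sub_add_sub_cancel]; rfl
        rw [← e]
        exact h3
  have hGle : ∀ m ν, m ≤ ν → (G ν).1 - (G m).1 ∈ (Iid R) ^ m := by
    intro m ν h
    obtain ⟨d, rfl⟩ := Nat.exists_eq_add_of_le h
    exact hGdiff m d
  refine ⟨⟨fun ν => Ideal.Quotient.mk ((Iid R) ^ ν) ((G ν).1), ?_⟩, ?_⟩
  · intro m ν h
    rw [Ideal.Quotient.factor_mk]
    exact (Submodule.Quotient.eq _).mpr (hGle m ν h)
  · apply Subtype.ext; funext ν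
    have hPν := (G ν).2
    have h0 : ((x - (p : CR R) ^ n * ι (G ν).1 : CR R) : Π ν : ℕ, ZR R ⧸ (Iid R) ^ ν) ν = 0 := by
      have h2 := hcomp (x - (p : CR R) ^ n * ι (G ν).1) ν (n+ν) (Nat.le_add_left _ _)
      rw [hPν, map_zero] at h2
      exact h2.symm
    exact sub_eq_zero.mp h0

end Frob
/-- Let `p` be a prime, `R` a perfect `𝔽_p`-algebra and `A` a `p`-ring with
residue algebra `R`:  a commutative ring with a decreasing sequence of ideals
`𝔞₁ ⊇ 𝔞₂ ⊇ …` with `𝔞_i·𝔞_j ⊆ 𝔞_{i+j}`, Hausdorff and complete for the topology defined by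
the `𝔞_ν` (the canonical map `A → lim_ν A/𝔞_ν` is bijective: injectivity is the Hausdorff
condition `hHaus`, surjectivity the completeness condition `hCompl` on compatible families),
together with a surjective ring homomorphism `π_A : A → R` with kernel `𝔞₁`.  Then there is a
unique ring homomorphism `α̂ : C(R) → A` with `π_A ∘ α̂ = π̄`. -/
theorem statement12 (p : ℕ) [Fact p.Prime] (R : Type*) [CommRing R] [CharP R p]
    (hperf : Function.Bijective fun x : R => x ^ p)
    (A : Type*) [CommRing A] (𝔞 : ℕ → Ideal A)
    (hdec : ∀ i, 1 ≤ i → 𝔞 (i + 1) ≤ 𝔞 i)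
    (hmul : ∀ i j, 1 ≤ i → 1 ≤ j → 𝔞 i * 𝔞 j ≤ 𝔞 (i + j))
    (hHaus : ∀ x : A, (∀ ν, 1 ≤ ν → x ∈ 𝔞 ν) → x = 0)
    (hCompl : ∀ f : ℕ → A, (∀ m ν, 1 ≤ m → m ≤ ν → f ν - f m ∈ 𝔞 m) →
      ∃ L : A, ∀ m, 1 ≤ m → L - f m ∈ 𝔞 m)
    (πA : A →+* R) (hπA : Function.Surjective πA) (hker : RingHom.ker πA = 𝔞 1) :
    ∃! α : CR R →+* A, ∀ x : CR R, πA (α x) = CtoR R x := by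
  classical
  have hp : p.Prime := Fact.out
  have hp2 : 2 ≤ p := hp.two_le
  -- Frobenius inverse iterates
  set e : R ≃ R := Equiv.ofBijective _ hperf with he
  set ρ : ℕ → R → R := fun n => e.symm^[n] with hρ
  have hesymm : ∀ r : R, (e.symm r) ^ p = r := fun r => e.apply_symm_apply r
  have hρ0 : ∀ r : R, ρ 0 r = r := fun r => rfl
  have hρsucc : ∀ (n : ℕ) (r : R), ρ (n+1) r = e.symm (ρ n r) := by
    intro n r; rw [hρ]; exact Function.iterate_succ_apply' _ _ _
  have hρ1 : ∀ r : R, ρ 1 r = e.symm r := fun r => by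
    rw [hρ]; rfl
  have hρpow : ∀ (n : ℕ) (r : R), (ρ n r) ^ (p ^ n) = r := by
    intro n; induction n with
    | zero => intro r; rw [hρ0, pow_zero, pow_one]
    | succ n ih =>
        intro r
        rw [hρsucc, pow_succ', pow_mul, hesymm]
        exact ih r
  have hiter : ∀ (n : ℕ) (x : R), x ^ (p ^ n) = (fun y : R => y ^ p)^[n] x := by
    intro n; induction n with
    | zero => intro x; rw [pow_zero, pow_one]; rfl
    | succ n ih =>
        intro x
        rw [Function.iterate_succ_apply']
        show x ^ p ^ (n+1) = ((fun y : R => y ^ p)^[n] x) ^ p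
        rw [← ih x, ← pow_mul, ← pow_succ]
  have hpowinj : ∀ (n : ℕ) (a b : R), a ^ (p ^ n) = b ^ (p ^ n) → a = b := by
    intro n a b hab
    rw [hiter, hiter] at hab
    exact Function.Injective.iterate hperf.1 n hab
  have hρmul : ∀ (n : ℕ) (r s : R), ρ n (r * s) = ρ n r * ρ n s := by
    intro n r s
    apply hpowinj n
    rw [mul_pow, hρpow, hρpow, hρpow]
  have hρone : ∀ n : ℕ, ρ n (1 : R) = 1 := by
    intro n; apply hpowinj n; rw [hρpow, one_pow]
  -- basic facts about the filtration on A
  have hchain : ∀ i j, 1 ≤ i → i ≤ j → 𝔞 j ≤ 𝔞 i := by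
    intro i j hi hij
    induction j, hij using Nat.le_induction with
    | base => exact le_rfl
    | succ j hij ih => exact (hdec j (hi.trans hij)).trans ih
  have hpa : (p : A) ∈ 𝔞 1 := by
    rw [← hker]
    exact RingHom.mem_ker.mpr (by rw [map_natCast]; exact CharP.cast_eq_zero R p)
  have hpow1 : ∀ n, 1 ≤ n → 𝔞 1 ^ n ≤ 𝔞 n := by
    intro n hn
    induction n, hn using Nat.le_induction with
    | base => rw [pow_one]
    | succ n hn ih =>
        calc 𝔞 1 ^ (n+1) = 𝔞 1 ^ n * 𝔞 1 := pow_succ _ _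
          _ ≤ 𝔞 n * 𝔞 1 := Ideal.mul_mono_left ih
          _ ≤ 𝔞 (n+1) := hmul n 1 hn le_rfl
  have hker' : ∀ a : A, πA a = 0 → a ∈ 𝔞 1 := fun a ha => hker ▸ RingHom.mem_ker.mpr ha
  have hHausEq : ∀ a b : A, (∀ m, 1 ≤ m → a - b ∈ 𝔞 m) → a = b := fun a b h =>
    sub_eq_zero.mp (hHaus _ h)
  have hcong : ∀ (n : ℕ) (a b : A), 1 ≤ n → a - b ∈ 𝔞 n → a ^ p - b ^ p ∈ 𝔞 (n+1) := by
    intro n a b hn hab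
    set c := a - b with hc
    have hbinom := st12_binom hp c b
    have hspan : Ideal.span {(p : A) * c} ≤ 𝔞 (n+1) := by
      rw [Ideal.span_le, Set.singleton_subset_iff]
      have h4 := hmul 1 n le_rfl hn (Ideal.mul_mem_mul hpa hab)
      rwa [add_comm] at h4
    have hcp : c ^ p ∈ 𝔞 (n+1) := by
      have h3 : c * c ∈ 𝔞 (n+1) :=
        hchain (n+1) (n+n) (by omega) (by omega) (hmul n n hn hn (Ideal.mul_mem_mul hab hab))
      have h5 : c ^ p = c ^ (p - 2) * (c * c) := by
        rw [← pow_two, ← pow_add]; congr 1; omega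
      rw [h5]
      exact Ideal.mul_mem_left _ _ h3
    have h6 : a ^ p - b ^ p = ((c + b) ^ p - c ^ p - b ^ p) + c ^ p := by
      rw [hc]; ring
    rw [h6]
    exact Submodule.add_mem _ (hspan hbinom) hcp
  have hcongn : ∀ (n : ℕ) (a b : A), a - b ∈ 𝔞 1 → a ^ (p ^ n) - b ^ (p ^ n) ∈ 𝔞 (n+1) := by
    intro n; induction n with
    | zero => intro a b h; simpa [pow_one] using h
    | succ n ih =>
        intro a b h
        have h1 := hcong (n+1) (a ^ (p ^ n)) (b ^ (p ^ n)) (by omega) (ih a b h)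
        rw [← pow_mul, ← pow_mul, ← pow_succ] at h1
        exact h1
  -- multiplicative representatives
  set lA : R → A := Function.surjInv hπA with hlAdef
  have hlA : ∀ r : R, πA (lA r) = r := fun r => Function.surjInv_eq hπA r
  have hτexists : ∀ r : R, ∃ t : A, ∀ m, 1 ≤ m → t - (lA (ρ m r)) ^ (p ^ m) ∈ 𝔞 m := by
    intro r
    have hstep1 : ∀ k : ℕ, (lA (ρ (k+1) r)) ^ (p ^ (k+1)) - (lA (ρ k r)) ^ (p ^ k) ∈ 𝔞 (k+1) := by
      intro k
      have h1 : (lA (ρ (k+1) r)) ^ p - lA (ρ k r) ∈ 𝔞 1 := by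
        apply hker'
        rw [map_sub, map_pow, hlA, hlA, hρsucc, hesymm, sub_self]
      have h2 := hcongn k ((lA (ρ (k+1) r)) ^ p) (lA (ρ k r)) h1
      rw [← pow_mul, ← pow_succ'] at h2
      exact h2
    refine hCompl (fun ν => (lA (ρ ν r)) ^ (p ^ ν)) ?_
    intro m ν hm hmν
    induction ν, hmν using Nat.le_induction with
    | base => simpa using (𝔞 m).zero_mem
    | succ ν hmν ih =>
        have h1 := hstep1 ν
        have h2 : 𝔞 (ν+1) ≤ 𝔞 m := hchain m (ν+1) hm (by omega)
        have h3 := Submodule.add_mem _ (h2 h1) ih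
        simpa [sub_add_sub_cancel] using h3
  choose τ hτ using hτexists
  have hτapprox : ∀ (r : R) (n : ℕ), τ r - ((lA (ρ (n+1) r)) ^ p) ^ (p ^ n) ∈ 𝔞 (n+1) := by
    intro r n
    have h1 := hτ r (n+1) (by omega)
    rw [pow_succ', pow_mul] at h1
    exact h1
  have hπτ : ∀ r : R, πA (τ r) = r := by
    intro r
    have h1 := hτ r 1 le_rfl
    have h2 : πA (τ r - (lA (ρ 1 r)) ^ (p ^ 1)) = 0 := by
      rw [← RingHom.mem_ker, hker]; exact h1
    rw [map_sub, sub_eq_zero] at h2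
    rw [h2, map_pow, hlA, pow_one, hρ1, hesymm]
  have hRep : ∀ a b : A, (∀ n : ℕ, ∃ c d : A, πA c = πA d ∧ a - c ^ (p ^ n) ∈ 𝔞 (n+1) ∧
      b - d ^ (p ^ n) ∈ 𝔞 (n+1)) → a = b := by
    intro a b hcd
    refine hHausEq a b (fun m hm => ?_)
    obtain ⟨c, d, hcdeq, hac, hbd⟩ := hcd m
    have h1 : c - d ∈ 𝔞 1 := hker' _ (by rw [map_sub, hcdeq, sub_self])
    have h2 := hcongn m c d h1
    have hle : 𝔞 (m+1) ≤ 𝔞 m := hchain m (m+1) hm (Nat.le_succ m)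
    have h3 : a - b = ((a - c ^ (p ^ m)) - (b - d ^ (p ^ m))) + (c ^ (p ^ m) - d ^ (p ^ m)) := by
      ring
    rw [h3]
    exact Submodule.add_mem _ (Submodule.sub_mem _ (hle hac) (hle hbd)) (hle h2)
  have hτone : τ 1 = 1 := by
    refine hRep (τ 1) 1 (fun n => ?_)
    refine ⟨(lA (ρ (n+1) 1)) ^ p, 1, ?_, hτapprox 1 n, by
      simpa using (𝔞 (n+1)).zero_mem⟩
    rw [map_pow, hlA, map_one, hρsucc, hesymm]
    exact hρone n
  have hτmul : ∀ r s : R, τ (r * s) = τ r * τ s := by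
    intro r s
    refine hRep _ _ (fun n => ?_)
    refine ⟨(lA (ρ (n+1) (r*s))) ^ p, (lA (ρ (n+1) r)) ^ p * (lA (ρ (n+1) s)) ^ p, ?_,
      hτapprox (r*s) n, ?_⟩
    · rw [map_pow, hlA, map_mul, map_pow, map_pow, hlA, hlA, hρsucc, hρsucc, hρsucc,
        hesymm, hesymm, hesymm, hρmul]
    · rw [mul_pow]
      have h1 := hτapprox r n
      have h2 := hτapprox s n
      have h3 : τ r * τ s - ((lA (ρ (n+1) r)) ^ p) ^ (p ^ n) * ((lA (ρ (n+1) s)) ^ p) ^ (p ^ n)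
          = τ r * (τ s - ((lA (ρ (n+1) s)) ^ p) ^ (p ^ n))
            + ((lA (ρ (n+1) s)) ^ p) ^ (p ^ n) * (τ r - ((lA (ρ (n+1) r)) ^ p) ^ (p ^ n)) := by
        ring
      rw [h3]
      exact Submodule.add_mem _ (Ideal.mul_mem_left _ _ h2) (Ideal.mul_mem_left _ _ h1)
  -- the ring homomorphism α : ℤR → A
  let τM : R →* A := { toFun := τ, map_one' := hτone, map_mul' := hτmul }
  let α : ZR R →+* A := ((MonoidAlgebra.lift ℤ A R) τM).toRingHom
  have hαof : ∀ r : R, α (of ℤ R r) = τ r := fun r => by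
    show ((MonoidAlgebra.lift ℤ A R) τM) (of ℤ R r) = τ r
    rw [MonoidAlgebra.lift_of]
    rfl
  have hπα : ∀ z : ZR R, πA (α z) = piHom R z := by
    have hcomp : πA.comp α = piHom R := st12_hom_ext (fun r => by
      rw [RingHom.comp_apply, hαof, hπτ, st12_piHom_of])
    intro z; rw [← hcomp]; rfl
  have hαI : ∀ (m : ℕ), 1 ≤ m → ∀ z ∈ (Iid R) ^ m, α z ∈ 𝔞 m := by
    intro m hm z hz
    have h1 : Ideal.map α (Iid R) ≤ 𝔞 1 := by
      rw [Ideal.map_le_iff_le_comap]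
      intro y hy
      rw [Ideal.mem_comap]
      exact hker' _ (by rw [hπα]; exact hy)
    have h2 : Ideal.map α ((Iid R) ^ m) ≤ 𝔞 m := by
      rw [Ideal.map_pow]
      exact (Ideal.pow_right_mono h1 m).trans (hpow1 m hm)
    exact h2 (Ideal.mem_map_of_mem α hz)
  -- lifts out of the quotients
  have hlQ : ∀ (ν : ℕ) (q : ZR R ⧸ (Iid R) ^ ν), ∃ z : ZR R, Ideal.Quotient.mk _ z = q :=
    fun ν q => Ideal.Quotient.mk_surjective q
  choose lQ hmk using hlQ
  have hcomp : ∀ (y : CR R) {m ν : ℕ} (h : m ≤ ν),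
      Ideal.Quotient.factor (Ideal.pow_le_pow_right h)
        ((y : ∀ ν : ℕ, ZR R ⧸ (Iid R) ^ ν) ν) = (y : ∀ ν : ℕ, ZR R ⧸ (Iid R) ^ ν) m :=
    fun y {m ν} h => y.2 h
  -- the limit map
  have hαhexists : ∀ x : CR R, ∃ L : A, ∀ m, 1 ≤ m →
      L - α (lQ m ((x : ∀ ν : ℕ, ZR R ⧸ (Iid R) ^ ν) m)) ∈ 𝔞 m := by
    intro x
    refine hCompl (fun ν => α (lQ ν ((x : ∀ ν : ℕ, ZR R ⧸ (Iid R) ^ ν) ν))) ?_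
    intro m ν hm hmν
    rw [← map_sub]
    refine hαI m hm _ ?_
    rw [← Ideal.Quotient.eq_zero_iff_mem, map_sub, hmk m,
      ← Ideal.Quotient.factor_mk (Ideal.pow_le_pow_right hmν),
      hmk ν, hcomp x hmν, sub_self]
  choose αh hαh using hαhexists
  have hchar : ∀ (x : CR R) (m : ℕ), 1 ≤ m → ∀ z : ZR R,
      Ideal.Quotient.mk ((Iid R) ^ m) z = (x : ∀ ν : ℕ, ZR R ⧸ (Iid R) ^ ν) m →
      αh x - α z ∈ 𝔞 m := by
    intro x m hm z hz
    have h1 := hαh x m hm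
    have h2 : α (lQ m ((x : ∀ ν : ℕ, ZR R ⧸ (Iid R) ^ ν) m)) - α z ∈ 𝔞 m := by
      rw [← map_sub]
      refine hαI m hm _ ?_
      rw [← Ideal.Quotient.eq_zero_iff_mem, map_sub, hmk, hz, sub_self]
    have h3 := Submodule.add_mem _ h1 h2
    simpa [sub_add_sub_cancel] using h3
  -- ring homomorphism structure
  have hone : αh 1 = 1 := by
    refine hHausEq _ _ (fun m hm => ?_)
    have h1 := hchar 1 m hm 1 (by rw [map_one]; rfl)
    rwa [map_one] at h1
  have hzero : αh 0 = 0 := by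
    refine hHausEq _ _ (fun m hm => ?_)
    have h1 := hchar 0 m hm 0 (by rw [map_zero]; rfl)
    rwa [map_zero] at h1
  have hmul' : ∀ x y : CR R, αh (x * y) = αh x * αh y := by
    intro x y
    refine hHausEq _ _ (fun m hm => ?_)
    have hzx := hmk m ((x : ∀ ν : ℕ, ZR R ⧸ (Iid R) ^ ν) m)
    have hzy := hmk m ((y : ∀ ν : ℕ, ZR R ⧸ (Iid R) ^ ν) m)
    set zx := lQ m ((x : ∀ ν : ℕ, ZR R ⧸ (Iid R) ^ ν) m)
    set zy := lQ m ((y : ∀ ν : ℕ, ZR R ⧸ (Iid R) ^ ν) m)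
    have h1 : αh (x * y) - α (zx * zy) ∈ 𝔞 m := by
      refine hchar (x * y) m hm _ ?_
      rw [map_mul, hzx, hzy]; rfl
    have h2 := hchar x m hm zx hzx
    have h3 := hchar y m hm zy hzy
    have h4 : αh (x * y) - αh x * αh y
        = (αh (x * y) - α (zx * zy))
          - (αh x * (αh y - α zy) + α zy * (αh x - α zx)) := by
      rw [map_mul]; ring
    rw [h4]
    exact Submodule.sub_mem _ h1 (Submodule.add_mem _
      (Ideal.mul_mem_left _ _ h3) (Ideal.mul_mem_left _ _ h2))
  have hadd' : ∀ x y : CR R, αh (x + y) = αh x + αh y := by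
    intro x y
    refine hHausEq _ _ (fun m hm => ?_)
    have hzx := hmk m ((x : ∀ ν : ℕ, ZR R ⧸ (Iid R) ^ ν) m)
    have hzy := hmk m ((y : ∀ ν : ℕ, ZR R ⧸ (Iid R) ^ ν) m)
    set zx := lQ m ((x : ∀ ν : ℕ, ZR R ⧸ (Iid R) ^ ν) m)
    set zy := lQ m ((y : ∀ ν : ℕ, ZR R ⧸ (Iid R) ^ ν) m)
    have h1 : αh (x + y) - α (zx + zy) ∈ 𝔞 m := by
      refine hchar (x + y) m hm _ ?_
      rw [map_add, hzx, hzy]; rfl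
    have h2 := hchar x m hm zx hzx
    have h3 := hchar y m hm zy hzy
    have h4 : αh (x + y) - (αh x + αh y)
        = (αh (x + y) - α (zx + zy)) - ((αh x - α zx) + (αh y - α zy)) := by
      rw [map_add]; ring
    rw [h4]
    exact Submodule.sub_mem _ h1 (Submodule.add_mem _ h2 h3)
  let Ahat : CR R →+* A :=
    { toFun := αh, map_one' := hone, map_mul' := hmul', map_zero' := hzero, map_add' := hadd' }
  -- the compatibility with the projections
  have hCtoR : ∀ (x : CR R) (z : ZR R),
      Ideal.Quotient.mk ((Iid R) ^ 1) z = (x : ∀ ν : ℕ, ZR R ⧸ (Iid R) ^ ν) 1 →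
      CtoR R x = piHom R z := by
    intro x z hz
    show (Ideal.Quotient.lift (Iid R) (piHom R) (fun _ ha => ha))
      ((Ideal.quotEquivOfEq (pow_one (Iid R))).toRingHom
        ((Ceval (ZR R) (Iid R) 1) x)) = piHom R z
    have h1 : (Ceval (ZR R) (Iid R) 1) x = Ideal.Quotient.mk ((Iid R) ^ 1) z := hz.symm
    rw [h1]
    simp [Ideal.quotEquivOfEq_mk, Ideal.Quotient.lift_mk]
    exact Ideal.Quotient.lift_mk _ _ _
  have hmain : ∀ x : CR R, πA (Ahat x) = CtoR R x := by
    intro x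
    have hz := hmk 1 ((x : ∀ ν : ℕ, ZR R ⧸ (Iid R) ^ ν) 1)
    set z := lQ 1 ((x : ∀ ν : ℕ, ZR R ⧸ (Iid R) ^ ν) 1)
    have h1 := hchar x 1 le_rfl z hz
    have h2 : πA (αh x - α z) = 0 := by
      rw [← RingHom.mem_ker, hker]; exact h1
    rw [map_sub, sub_eq_zero] at h2
    show πA (αh x) = CtoR R x
    rw [h2, hπα, hCtoR x z hz]
  -- uniqueness
  have huniq : ∀ γ : CR R →+* A, (∀ x, πA (γ x) = CtoR R x) → ∀ x, γ x = αh x := by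
    intro γ hγ
    set ι := CofRingHom (ZR R) (Iid R) with hιdef
    have hCtoRι : ∀ f : ZR R, CtoR R (ι f) = piHom R f := fun f => hCtoR (ι f) f rfl
    have hγτ : ∀ δ : CR R →+* A, (∀ x, πA (δ x) = CtoR R x) →
        ∀ r : R, δ (ι (of ℤ R r)) = τ r := by
      intro δ hδ r
      refine hRep _ _ (fun n => ?_)
      refine ⟨δ (ι (of ℤ R (ρ n r))), (lA (ρ (n+1) r)) ^ p, ?_, ?_, hτapprox r n⟩
      · rw [hδ, hCtoRι, st12_piHom_of, map_pow, hlA, hρsucc, hesymm]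
      · have h1 : (of ℤ R (ρ n r)) ^ (p ^ n) = of ℤ R r := by
          rw [← map_pow, hρpow]
        rw [← map_pow, ← map_pow, h1, sub_self]
        exact (𝔞 (n+1)).zero_mem
    have hcompose : γ.comp ι = Ahat.comp ι := st12_hom_ext (fun r => by
      rw [RingHom.comp_apply, RingHom.comp_apply, hγτ γ hγ r]
      exact (hγτ Ahat hmain r).symm)
    have hγι : ∀ f : ZR R, γ (ι f) = αh (ι f) := fun f => RingHom.congr_fun hcompose f
    intro x
    refine hHausEq _ _ (fun n hn => ?_)
    have hz := hmk n ((x : ∀ ν : ℕ, ZR R ⧸ (Iid R) ^ ν) n)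
    set z := lQ n ((x : ∀ ν : ℕ, ZR R ⧸ (Iid R) ^ ν) n)
    have hker0 : ((x - ι z : CR R) : ∀ ν : ℕ, ZR R ⧸ (Iid R) ^ ν) n = 0 := by
      show (x : ∀ ν : ℕ, ZR R ⧸ (Iid R) ^ ν) n - Ideal.Quotient.mk ((Iid R) ^ n) z = 0
      rw [hz, sub_self]
    obtain ⟨w, hw⟩ := st12_ker_eval p R hperf n (x - ι z) hker0
    have hx2 : x = ι z + (p : CR R) ^ n * w := by rw [← hw]; ring
    have hγx : γ x = γ (ι z) + (p : A) ^ n * γ w := by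
      rw [hx2, map_add, map_mul, map_pow, map_natCast]
    have hαx : αh x = αh (ι z) + (p : A) ^ n * αh w := by
      have h5 : Ahat x = Ahat (ι z) + (p : A) ^ n * Ahat w := by
        rw [hx2, map_add, map_mul, map_pow, map_natCast]
      exact h5
    rw [hγx, hαx, hγι z]
    have h6 : αh (ι z) + (p : A) ^ n * γ w - (αh (ι z) + (p : A) ^ n * αh w)
        = (p : A) ^ n * (γ w - αh w) := by ring
    rw [h6]
    exact hpow1 n hn (Ideal.mul_mem_right _ _ (Ideal.pow_mem_pow hpa n))
  exact ⟨Ahat, hmain, fun γ hγ => RingHom.ext (fun x => huniq γ hγ x)⟩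
end

section
/- Let p be a prime and R a perfect 𝔽_p-algebra. Then there is a unique ring isomorphism C(R) ≅ W(R) between C(R) and the ring W(R) of p-typical Witt vectors of R that commutes with the canonical projections of both rings onto R (for C(R) the projection induced by π, for W(R) the projection onto the zeroth Witt component). -/
set_option synthInstance.maxHeartbeats 1000000
set_option maxHeartbeats 1000000

open MonoidAlgebra

namespace St13

variable (p : ℕ) [Fact p.Prime] (R : Type*) [CommRing R]

theorem freshman {S : Type*} [CommRing S] (hp : (p : S) = 0) (a b : S) :
    (a + b) ^ p = a ^ p + b ^ p := by
  have hprime : p.Prime := Fact.out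
  rw [add_pow]
  have hsub : ({0, p} : Finset ℕ) ⊆ Finset.range (p + 1) := by
    intro i hi
    simp only [Finset.mem_insert, Finset.mem_singleton] at hi
    rcases hi with rfl | rfl <;> simp [Finset.mem_range, hprime.pos, Nat.lt_succ_self]
  have hmid : ∀ i ∈ Finset.range (p + 1), i ∉ ({0, p} : Finset ℕ) →
      a ^ i * b ^ (p - i) * (p.choose i : S) = 0 := by
    intro i hi hni
    simp only [Finset.mem_insert, Finset.mem_singleton, not_or] at hni
    have h1 : i < p := lt_of_le_of_ne (Nat.lt_succ_iff.mp (Finset.mem_range.mp hi)) hni.2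
    obtain ⟨m, hm⟩ := hprime.dvd_choose_self hni.1 h1
    rw [hm]
    push_cast
    rw [hp]
    ring
  rw [← Finset.sum_subset hsub hmid, Finset.sum_pair hprime.pos.ne]
  simp [Nat.choose_self]
  ring

theorem pow_p_span {S : Type*} [CommRing S] {m : ℕ} (hm : 1 ≤ m) {u v : S}
    (h : u - v ∈ Ideal.span {(p : S) ^ m}) :
    u ^ p - v ^ p ∈ Ideal.span {(p : S) ^ (m + 1)} := by
  have hprime : p.Prime := Fact.out
  rw [Ideal.mem_span_singleton] at h ⊢
  obtain ⟨z, hz⟩ := h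
  have hu : u = (p : S) ^ m * z + v := by linear_combination hz
  rw [hu, add_pow, Finset.sum_range_succ']
  have h0 : ((p : S) ^ m * z) ^ 0 * v ^ (p - 0) * (p.choose 0 : S) = v ^ p := by simp
  rw [h0, add_sub_cancel_right]
  apply Finset.dvd_sum
  intro k hk
  rcases Nat.eq_zero_or_pos k with rfl | hkpos
  · refine ⟨z * v ^ (p - 1), ?_⟩
    rw [Nat.choose_one_right]
    push_cast
    ring
  · have hle : m + 1 ≤ m * (k + 1) := by nlinarith
    refine dvd_trans (pow_dvd_pow (p : S) hle) ⟨z ^ (k + 1) * v ^ (p - (k + 1)) * (p.choose (k + 1) : S), ?_⟩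
    rw [mul_pow, ← pow_mul]
    ring

theorem pow_p_span_iter {S : Type*} [CommRing S] {u v : S}
    (h : u - v ∈ Ideal.span {(p : S) ^ 1}) (n : ℕ) :
    u ^ p ^ n - v ^ p ^ n ∈ Ideal.span {(p : S) ^ (n + 1)} := by
  induction n with
  | zero => simpa using h
  | succ n ih =>
      have h2 := pow_p_span p (Nat.le_add_left 1 n) ih
      rw [← pow_mul, ← pow_mul, ← pow_succ] at h2
      exact h2



theorem pi_of (r : R) : piHom R (of ℤ R r) = r := by
  simp [piHom]

theorem pi_single (r : R) (n : ℤ) : piHom R (MonoidAlgebra.single r n) = n • r := by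
  simp [piHom, MonoidAlgebra.lift_single]

theorem gen_mem_I (x y : R) : of ℤ R x + of ℤ R y - of ℤ R (x + y) ∈ Iid R := by
  rw [Iid, RingHom.mem_ker, map_sub, map_add, pi_of, pi_of, pi_of, sub_self]

theorem p_mem_I [CharP R p] : (p : ZR R) ∈ Iid R := by
  simp [Iid, RingHom.mem_ker, map_natCast, CharP.cast_eq_zero]

/-- The generating set of `I`. -/
def Jgen : Set (ZR R) := {z | ∃ x y : R, z = of ℤ R x + of ℤ R y - of ℤ R (x + y)}

theorem quot_of_add (x y : R) :
    Ideal.Quotient.mk (Ideal.span (Jgen R)) (of ℤ R x) +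
      Ideal.Quotient.mk (Ideal.span (Jgen R)) (of ℤ R y) =
      Ideal.Quotient.mk (Ideal.span (Jgen R)) (of ℤ R (x + y)) := by
  rw [← map_add, Ideal.Quotient.mk_eq_mk_iff_sub_mem]
  exact Ideal.subset_span ⟨x, y, rfl⟩

theorem quot_of_zero :
    Ideal.Quotient.mk (Ideal.span (Jgen R)) (of ℤ R 0) = 0 := by
  rw [Ideal.Quotient.eq_zero_iff_mem]
  have h := Ideal.subset_span (s := Jgen R) ⟨(0 : R), 0, rfl⟩
  simpa using h

theorem quot_single (n : ℤ) (r : R) :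
    Ideal.Quotient.mk (Ideal.span (Jgen R)) (MonoidAlgebra.single r n) =
      Ideal.Quotient.mk (Ideal.span (Jgen R)) (of ℤ R (n • r)) := by
  induction n using Int.induction_on with
  | zero =>
      rw [zero_smul, MonoidAlgebra.single_zero, map_zero, quot_of_zero R]
  | succ n ih =>
      have hs : MonoidAlgebra.single r ((n : ℤ) + 1) =
          MonoidAlgebra.single r (n : ℤ) + of ℤ R r := by
        rw [MonoidAlgebra.of_apply]
        exact MonoidAlgebra.single_add r (n : ℤ) 1
      rw [hs, map_add, ih, quot_of_add, add_smul, one_smul]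
  | pred n ih =>
      have hs : MonoidAlgebra.single r (-(n : ℤ) - 1) =
          MonoidAlgebra.single r (-(n : ℤ)) - of ℤ R r := by
        rw [MonoidAlgebra.of_apply, eq_sub_iff_add_eq, ← MonoidAlgebra.single_add]
        norm_num
      rw [hs, map_sub, ih]
      set q := Ideal.Quotient.mk (Ideal.span (Jgen R)) with hq
      have hneg : q (of ℤ R r) + q (of ℤ R (-r)) = 0 := by
        rw [quot_of_add]; simpa using quot_of_zero R
      have : q (of ℤ R (-(n : ℤ) • r)) + q (of ℤ R (-r)) = q (of ℤ R ((-(n : ℤ) - 1) • r)) := by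
        rw [quot_of_add]
        congr 1
        rw [sub_smul, one_smul, sub_eq_add_neg]
      linear_combination this - hneg

theorem quot_eq_pi (a : ZR R) :
    Ideal.Quotient.mk (Ideal.span (Jgen R)) a =
      Ideal.Quotient.mk (Ideal.span (Jgen R)) (of ℤ R (piHom R a)) := by
  induction a using MonoidAlgebra.induction_on with
  | of g => rw [pi_of]
  | add f g hf hg =>
      rw [map_add (Ideal.Quotient.mk _) f g, hf, hg, quot_of_add, map_add (piHom R) f g]
  | smul n f hf =>
      have h1 : MonoidAlgebra.single (piHom R f) n = n • of ℤ R (piHom R f) := by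
        rw [MonoidAlgebra.of_apply, MonoidAlgebra.smul_single', mul_one]
      calc Ideal.Quotient.mk (Ideal.span (Jgen R)) (n • f)
          = n • Ideal.Quotient.mk (Ideal.span (Jgen R)) f := map_zsmul _ n f
        _ = n • Ideal.Quotient.mk (Ideal.span (Jgen R)) (of ℤ R (piHom R f)) := by rw [hf]
        _ = Ideal.Quotient.mk (Ideal.span (Jgen R)) (MonoidAlgebra.single (piHom R f) n) := by
            rw [h1, map_zsmul]
        _ = Ideal.Quotient.mk (Ideal.span (Jgen R)) (of ℤ R (n • piHom R f)) := quot_single R n _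
        _ = Ideal.Quotient.mk (Ideal.span (Jgen R)) (of ℤ R (piHom R (n • f))) := by
            rw [map_zsmul (piHom R) n f]

theorem I_le_J : Iid R ≤ Ideal.span (Jgen R) := by
  intro a ha
  rw [← Ideal.Quotient.eq_zero_iff_mem, quot_eq_pi]
  rw [Iid, RingHom.mem_ker] at ha
  rw [ha, quot_of_zero R]


variable [CharP R p]

theorem gen_mem_K (hsurj : Function.Surjective fun x : R => x ^ p) (x y : R) :
    of ℤ R x + of ℤ R y - of ℤ R (x + y) ∈ Ideal.span {(p : ZR R)} ⊔ (Iid R) ^ 2 := by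
  set K := Ideal.span {(p : ZR R)} ⊔ (Iid R) ^ 2 with hK
  set q := Ideal.Quotient.mk K with hq
  have hpQ : ((p : ℕ) : ZR R ⧸ K) = 0 := by
    rw [← map_natCast q, Ideal.Quotient.eq_zero_iff_mem]
    exact Ideal.mem_sup_left (Ideal.subset_span rfl)
  have hII : ∀ a ∈ Iid R, ∀ b ∈ Iid R, q a * q b = 0 := by
    intro a ha b hb
    rw [← map_mul, Ideal.Quotient.eq_zero_iff_mem]
    exact Ideal.mem_sup_right (by rw [pow_two]; exact Ideal.mul_mem_mul ha hb)
  obtain ⟨u, hu⟩ := hsurj x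
  obtain ⟨v, hv⟩ := hsurj y
  simp only at hu hv
  set δ := of ℤ R u + of ℤ R v - of ℤ R (u + v) with hδ
  have hδI : δ ∈ Iid R := gen_mem_I R u v
  have hδp : q δ ^ p = 0 := by
    have h2 : q δ ^ 2 = 0 := by rw [pow_two]; exact hII _ hδI _ hδI
    rw [show p = 2 + (p - 2) by have := (Fact.out : p.Prime).two_le; omega, pow_add, h2, zero_mul]
  rw [← Ideal.Quotient.eq_zero_iff_mem, map_sub, map_add, sub_eq_zero]
  have key : q (of ℤ R x) + q (of ℤ R y) = q (of ℤ R (x + y)) := by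
    calc q (of ℤ R x) + q (of ℤ R y) = q (of ℤ R u) ^ p + q (of ℤ R v) ^ p := by
          rw [← hu, ← hv, map_pow (of ℤ R) u p, map_pow (of ℤ R) v p, map_pow q, map_pow q]
      _ = (q (of ℤ R u) + q (of ℤ R v)) ^ p := (freshman p hpQ _ _).symm
      _ = (q (of ℤ R (u + v)) + q δ) ^ p := by
          congr 1
          rw [← map_add q, ← map_add q]
          congr 1
          rw [hδ]
          ring
      _ = q (of ℤ R (u + v)) ^ p + q δ ^ p := freshman p hpQ _ _
      _ = q (of ℤ R ((u + v) ^ p)) := by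
          rw [hδp, add_zero, map_pow (of ℤ R) (u + v) p, map_pow q]
      _ = q (of ℤ R (x + y)) := by
          have h3 : (u + v) ^ p = x + y := by
            rw [freshman p (by exact_mod_cast CharP.cast_eq_zero R p) u v, hu, hv]
          rw [h3]
  exact key

theorem I_le_K (hsurj : Function.Surjective fun x : R => x ^ p) :
    Iid R ≤ Ideal.span {(p : ZR R)} ⊔ (Iid R) ^ 2 := by
  intro a ha
  refine Ideal.span_le.mpr ?_ (I_le_J R ha)
  rintro z ⟨x, y, rfl⟩
  exact gen_mem_K p R hsurj x y

theorem pow_le (hsurj : Function.Surjective fun x : R => x ^ p) (n : ℕ) :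
    (Iid R) ^ n ≤ Ideal.span {(p : ZR R) ^ n} ⊔ (Iid R) ^ (n + 1) := by
  induction n with
  | zero => rw [pow_zero, pow_zero, Ideal.span_singleton_one]; exact le_sup_of_le_left le_top
  | succ n ih =>
      have step : (Iid R) ^ (n + 1) ≤
          (Ideal.span {(p : ZR R) ^ n} ⊔ (Iid R) ^ (n + 1)) *
            (Ideal.span {(p : ZR R)} ⊔ (Iid R) ^ 2) := by
        rw [pow_succ]
        exact Ideal.mul_mono ih (I_le_K p R hsurj)
      refine step.trans ?_
      rw [Ideal.sup_mul, Ideal.mul_sup, Ideal.mul_sup]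
      have hpn : Ideal.span {(p : ZR R) ^ n} ≤ (Iid R) ^ n :=
        (Ideal.span_singleton_le_iff_mem _).mpr (Ideal.pow_mem_pow (p_mem_I p R) n)
      have hp1 : Ideal.span {(p : ZR R)} ≤ Iid R :=
        (Ideal.span_singleton_le_iff_mem _).mpr (p_mem_I p R)
      refine sup_le (sup_le ?_ ?_) (sup_le ?_ ?_)
      · rw [Ideal.span_singleton_mul_span_singleton, ← pow_succ]
        exact le_sup_left
      · refine le_sup_of_le_right ?_
        calc Ideal.span {(p : ZR R) ^ n} * (Iid R) ^ 2 ≤ (Iid R) ^ n * (Iid R) ^ 2 :=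
              Ideal.mul_mono hpn le_rfl
          _ = (Iid R) ^ (n + 2) := by rw [← pow_add]
          _ ≤ (Iid R) ^ (n + 2) := le_rfl
      · refine le_sup_of_le_right ?_
        calc (Iid R) ^ (n + 1) * Ideal.span {(p : ZR R)} ≤ (Iid R) ^ (n + 1) * Iid R :=
              Ideal.mul_mono le_rfl hp1
          _ = (Iid R) ^ (n + 2) := by rw [← pow_succ]
      · refine le_sup_of_le_right ?_
        calc (Iid R) ^ (n + 1) * (Iid R) ^ 2 = (Iid R) ^ (n + 3) := by rw [← pow_add]
          _ ≤ (Iid R) ^ (n + 2) := Ideal.pow_le_pow_right (by omega)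

theorem decomp (hsurj : Function.Surjective fun x : R => x ^ p) (n : ℕ) (a : ZR R)
    (ha : a ∈ (Iid R) ^ n) :
    ∃ t : R, a - (p : ZR R) ^ n * of ℤ R t ∈ (Iid R) ^ (n + 1) := by
  have h := pow_le p R hsurj n ha
  rw [Submodule.mem_sup] at h
  obtain ⟨b, hb, c, hc, hbc⟩ := h
  rw [Ideal.mem_span_singleton] at hb
  obtain ⟨z, hz⟩ := hb
  refine ⟨piHom R z, ?_⟩
  have hzI : z - of ℤ R (piHom R z) ∈ Iid R := by
    rw [Iid, RingHom.mem_ker, map_sub, pi_of, sub_self]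
  have heq : a - (p : ZR R) ^ n * of ℤ R (piHom R z) =
      (p : ZR R) ^ n * (z - of ℤ R (piHom R z)) + c := by
    rw [← hbc, hz]; ring
  rw [heq]
  refine Submodule.add_mem _ ?_ hc
  rw [pow_succ]
  exact Ideal.mul_mem_mul (Ideal.pow_mem_pow (p_mem_I p R) n) hzI

open WittVector

theorem exists_p_mul [PerfectRing R p] (w : WittVector p R) (h : w.coeff 0 = 0) :
    ∃ z, w = (p : WittVector p R) * z := by
  obtain ⟨z, hz⟩ := (frobenius_bijective p R).surjective (WittVector.mk p fun n => w.coeff (n + 1))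
  refine ⟨z, ?_⟩
  have hVy : verschiebung (frobenius z) = w := by
    rw [hz]
    ext n
    cases n with
    | zero => rw [verschiebung_coeff_zero, h]
    | succ n => rw [verschiebung_coeff_succ, WittVector.coeff_mk]
  rw [← hVy, verschiebung_frobenius, mul_comm]

theorem coeff_pow_mul (ν : ℕ) (w : WittVector p R) :
    ∀ i < ν, ((p : WittVector p R) ^ ν * w).coeff i = 0 := by
  induction ν with
  | zero => intro i hi; omega
  | succ ν ih =>
      intro i hi
      have hrw : (p : WittVector p R) ^ (ν + 1) * w = (p : WittVector p R) ^ ν * w * p := by ring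
      rw [hrw]
      cases i with
      | zero => exact mul_charP_coeff_zero _
      | succ i =>
          rw [mul_charP_coeff_succ, ih i (by omega), zero_pow (Fact.out : p.Prime).ne_zero]

theorem coeff_of_mem_span (ν : ℕ) (w : WittVector p R)
    (h : w ∈ Ideal.span {(p : WittVector p R) ^ ν}) : ∀ i < ν, w.coeff i = 0 := by
  obtain ⟨z, hz⟩ := Ideal.mem_span_singleton.mp h
  rw [hz]
  exact coeff_pow_mul p R ν z

theorem frob_inj_R [PerfectRing R p] {x : R} (h : x ^ p = 0) : x = 0 := by
  apply (PerfectRing.bijective_frobenius (R := R) (p := p)).injective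
  show x ^ p = (0 : R) ^ p
  rw [h, zero_pow (Fact.out : p.Prime).ne_zero]

theorem span_of_coeff [PerfectRing R p] (ν : ℕ) (w : WittVector p R)
    (h : ∀ i < ν, w.coeff i = 0) : w ∈ Ideal.span {(p : WittVector p R) ^ ν} := by
  induction ν generalizing w with
  | zero => rw [pow_zero, Ideal.span_singleton_one]; exact Submodule.mem_top
  | succ ν ih =>
      obtain ⟨z, hz⟩ := exists_p_mul p R w (h 0 (Nat.succ_pos ν))
      have hz' : ∀ i < ν, z.coeff i = 0 := by
        intro i hi
        refine frob_inj_R p R ?_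
        have h1 : w.coeff (i + 1) = z.coeff i ^ p := by
          rw [hz, mul_comm, mul_charP_coeff_succ]
        rw [← h1]
        exact h (i + 1) (by omega)
      obtain ⟨z', hz'2⟩ := Ideal.mem_span_singleton.mp (ih z hz')
      rw [Ideal.mem_span_singleton]
      exact ⟨z', by rw [hz, hz'2, pow_succ]; ring⟩

theorem p_mul_cancel [PerfectRing R p] (w : WittVector p R)
    (h : (p : WittVector p R) * w = 0) : w = 0 := by
  have hV : verschiebung (frobenius w) = 0 := by
    rw [verschiebung_frobenius, mul_comm, h]
  have hF : frobenius w = 0 := by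
    ext n
    have := congrArg (fun x : WittVector p R => x.coeff (n + 1)) hV
    simpa [verschiebung_coeff_succ] using this
  apply (frobenius_bijective p R).injective
  rw [hF, map_zero]

theorem pow_p_cancel [PerfectRing R p] (n : ℕ) (w : WittVector p R)
    (h : (p : WittVector p R) ^ n * w = 0) : w = 0 := by
  induction n generalizing w with
  | zero => simpa using h
  | succ n ih =>
      refine p_mul_cancel p R w (ih ((p : WittVector p R) * w) ?_)
      rw [← h]; ring

theorem sepW (w : WittVector p R) (h : ∀ ν, w ∈ Ideal.span {(p : WittVector p R) ^ ν}) :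
    w = 0 := by
  ext n
  rw [WittVector.zero_coeff]
  exact coeff_of_mem_span p R (n + 1) w (h (n + 1)) n (Nat.lt_succ_self n)

theorem decompW [PerfectRing R p] (w : WittVector p R) :
    ∃ z, w = teichmuller p (w.coeff 0) + (p : WittVector p R) * z := by
  have h : (w - teichmuller p (w.coeff 0)).coeff 0 = 0 := by
    have h2 := map_sub (WittVector.constantCoeff (p := p) (R := R)) w (teichmuller p (w.coeff 0))
    simp only [WittVector.constantCoeff_apply, teichmuller_coeff_zero] at h2
    rw [h2, sub_self]
  obtain ⟨z, hz⟩ := exists_p_mul p R _ h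
  exact ⟨z, by rw [← hz]; ring⟩

noncomputable def alphaHom : ZR R →+* WittVector p R :=
  (MonoidAlgebra.lift ℤ (WittVector p R) R (WittVector.teichmuller p)).toRingHom

theorem alpha_of (r : R) : alphaHom p R (of ℤ R r) = teichmuller p r := by
  simp [alphaHom]

theorem constant_comp_alpha :
    (WittVector.constantCoeff).comp (alphaHom p R) = piHom R := by
  refine MonoidAlgebra.ringHom_ext (fun b => ?_) (fun r => ?_)
  · rw [show (MonoidAlgebra.single (1 : R) b : ZR R) = ((b : ℤ) : ZR R) by
      rw [MonoidAlgebra.intCast_def, Int.cast_id], map_intCast, map_intCast]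
  · have h1 : (MonoidAlgebra.single r 1 : ZR R) = of ℤ R r := rfl
    rw [h1, RingHom.comp_apply, alpha_of, pi_of]
    exact teichmuller_coeff_zero p r

theorem coeff0_alpha (a : ZR R) : (alphaHom p R a).coeff 0 = piHom R a := by
  have := RingHom.congr_fun (constant_comp_alpha p R) a
  simpa using this

theorem alpha_mem_span [PerfectRing R p] {a : ZR R} (ha : a ∈ Iid R) :
    alphaHom p R a ∈ Ideal.span {(p : WittVector p R)} := by
  have h0 : (alphaHom p R a).coeff 0 = 0 := by
    rw [coeff0_alpha]
    exact ha
  obtain ⟨z, hz⟩ := exists_p_mul p R _ h0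
  exact Ideal.mem_span_singleton.mpr ⟨z, hz⟩

theorem alpha_pow_mem [PerfectRing R p] {ν : ℕ} {a : ZR R} (ha : a ∈ (Iid R) ^ ν) :
    alphaHom p R a ∈ Ideal.span {(p : WittVector p R) ^ ν} := by
  have hmap : Ideal.map (alphaHom p R) (Iid R) ≤ Ideal.span {(p : WittVector p R)} :=
    Ideal.map_le_iff_le_comap.mpr fun b hb => alpha_mem_span p R hb
  have h1 : alphaHom p R a ∈ Ideal.map (alphaHom p R) ((Iid R) ^ ν) :=
    Ideal.mem_map_of_mem _ ha
  rw [Ideal.map_pow] at h1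
  have h2 : Ideal.map (alphaHom p R) (Iid R) ^ ν ≤ Ideal.span {(p : WittVector p R)} ^ ν :=
    Ideal.pow_right_mono hmap ν
  rw [Ideal.span_singleton_pow] at h2
  exact h2 h1

theorem of_zero_mem_I : of ℤ R (0 : R) ∈ Iid R := by
  rw [Iid, RingHom.mem_ker, pi_of]

theorem alpha_span_to_I [PerfectRing R p] (hsurj : Function.Surjective fun x : R => x ^ p)
    (ν : ℕ) (a : ZR R) (h : alphaHom p R a ∈ Ideal.span {(p : WittVector p R) ^ ν}) :
    a ∈ (Iid R) ^ ν := by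
  induction ν generalizing a with
  | zero => rw [pow_zero, Ideal.one_eq_top]; exact Submodule.mem_top
  | succ ν ih =>
      obtain ⟨z, hz⟩ := Ideal.mem_span_singleton.mp h
      have haν : a ∈ (Iid R) ^ ν := by
        refine ih a (Ideal.mem_span_singleton.mpr ⟨(p : WittVector p R) * z, ?_⟩)
        rw [hz]; ring
      obtain ⟨t, ht⟩ := decomp p R hsurj ν a haν
      obtain ⟨z', hz'⟩ := Ideal.mem_span_singleton.mp (alpha_pow_mem p R ht)
      have hαc : alphaHom p R a - (p : WittVector p R) ^ ν * teichmuller p t =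
          (p : WittVector p R) ^ (ν + 1) * z' := by
        rw [← hz']
        rw [map_sub, map_mul, map_pow, map_natCast, alpha_of]
      have hteich : (p : WittVector p R) ^ ν *
          (teichmuller p t - (p : WittVector p R) * (z - z')) = 0 := by
        have : (p : WittVector p R) ^ ν * teichmuller p t =
            (p : WittVector p R) ^ (ν + 1) * (z - z') := by
          have h3 := hαc
          rw [hz] at h3
          linear_combination -h3
        rw [mul_sub, this, pow_succ]
        ring
      have ht0 : t = 0 := by
        have h4 := pow_p_cancel p R ν _ hteich
        have h5 : teichmuller p t = (p : WittVector p R) * (z - z') := by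
          linear_combination h4
        have h6 : t = ((p : WittVector p R) * (z - z')).coeff 0 := by
          rw [← h5, teichmuller_coeff_zero]
        rw [h6, mul_comm, mul_charP_coeff_zero]
      have hmem : (p : ZR R) ^ ν * of ℤ R t ∈ (Iid R) ^ (ν + 1) := by
        rw [pow_succ]
        refine Ideal.mul_mem_mul (Ideal.pow_mem_pow (p_mem_I p R) ν) ?_
        rw [ht0]
        exact of_zero_mem_I R
      have : a = (a - (p : ZR R) ^ ν * of ℤ R t) + (p : ZR R) ^ ν * of ℤ R t := by ring
      rw [this]
      exact Submodule.add_mem _ ht hmem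

theorem approx [PerfectRing R p] (ν : ℕ) (w : WittVector p R) :
    ∃ a : ZR R, alphaHom p R a - w ∈ Ideal.span {(p : WittVector p R) ^ ν} := by
  induction ν generalizing w with
  | zero => exact ⟨0, by rw [pow_zero, Ideal.span_singleton_one]; exact Submodule.mem_top⟩
  | succ ν ih =>
      obtain ⟨z, hw⟩ := decompW p R w
      obtain ⟨b, hb⟩ := ih z
      obtain ⟨y, hy⟩ := Ideal.mem_span_singleton.mp hb
      refine ⟨of ℤ R (w.coeff 0) + (p : ZR R) * b, Ideal.mem_span_singleton.mpr ⟨y, ?_⟩⟩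
      have hab : alphaHom p R b = z + (p : WittVector p R) ^ ν * y := by
        linear_combination hy
      have h1 : alphaHom p R (of ℤ R (w.coeff 0) + (p : ZR R) * b) =
          teichmuller p (w.coeff 0) + (p : WittVector p R) * alphaHom p R b := by
        rw [map_add, map_mul, map_natCast, alpha_of]
      rw [h1, hab]
      linear_combination -hw


variable [PerfectRing R p]

noncomputable def gHom (ν : ℕ) : ZR R →+* TruncatedWittVector p ν R :=
  (WittVector.truncate ν).comp (alphaHom p R)

theorem gHom_ker (ν : ℕ) (a : ZR R) (ha : a ∈ (Iid R) ^ ν) : gHom p R ν a = 0 := by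
  have h2 := coeff_of_mem_span p R ν _ (alpha_pow_mem p R ha)
  show WittVector.truncate ν (alphaHom p R a) = 0
  rw [← RingHom.mem_ker, WittVector.mem_ker_truncate]
  exact h2

noncomputable def fbar (ν : ℕ) : (ZR R ⧸ (Iid R) ^ ν) →+* TruncatedWittVector p ν R :=
  Ideal.Quotient.lift _ (gHom p R ν) (gHom_ker p R ν)

noncomputable def fC (ν : ℕ) : CR R →+* TruncatedWittVector p ν R :=
  (fbar p R ν).comp (Ceval (ZR R) (Iid R) ν)

theorem fC_eval (ν : ℕ) (x : CR R) (a : ZR R)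
    (ha : Ideal.Quotient.mk ((Iid R) ^ ν) a = (x : Π ν : ℕ, ZR R ⧸ (Iid R) ^ ν) ν) :
    fC p R ν x = WittVector.truncate ν (alphaHom p R a) := by
  show fbar p R ν ((x : Π ν : ℕ, ZR R ⧸ (Iid R) ^ ν) ν) = _
  rw [← ha]
  rfl

theorem fC_compat : ∀ (k₁ k₂ : ℕ) (hk : k₁ ≤ k₂),
    (TruncatedWittVector.truncate hk).comp (fC p R k₂) = fC p R k₁ := by
  intro k₁ k₂ hk
  ext x
  obtain ⟨a, ha⟩ := Ideal.Quotient.mk_surjective ((x : Π ν : ℕ, ZR R ⧸ (Iid R) ^ ν) k₂)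
  have ha1 : Ideal.Quotient.mk ((Iid R) ^ k₁) a = (x : Π ν : ℕ, ZR R ⧸ (Iid R) ^ ν) k₁ := by
    rw [← x.2 hk, ← ha, Ideal.Quotient.factor_mk]
  rw [RingHom.comp_apply, fC_eval p R k₂ x a ha,
    TruncatedWittVector.truncate_wittVector_truncate, fC_eval p R k₁ x a ha1]

noncomputable def psi : CR R →+* WittVector p R :=
  WittVector.lift (fC p R) (fC_compat p R)

theorem trunc_psi (ν : ℕ) (x : CR R) : WittVector.truncate ν (psi p R x) = fC p R ν x :=
  WittVector.truncate_lift (n := ν) (f_compat := fC_compat p R) x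

theorem psi_inj (hsurj : Function.Surjective fun x : R => x ^ p) :
    Function.Injective (psi p R) := by
  rw [injective_iff_map_eq_zero]
  intro x hx
  have hν : ∀ ν : ℕ, (x : Π ν : ℕ, ZR R ⧸ (Iid R) ^ ν) ν = 0 := by
    intro ν
    obtain ⟨a, ha⟩ := Ideal.Quotient.mk_surjective ((x : Π ν : ℕ, ZR R ⧸ (Iid R) ^ ν) ν)
    have h1 : WittVector.truncate ν (alphaHom p R a) = 0 := by
      rw [← fC_eval p R ν x a ha, ← trunc_psi p R ν x, hx, map_zero]
    have h2 : ∀ i < ν, (alphaHom p R a).coeff i = 0 :=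
      (WittVector.mem_ker_truncate ν (alphaHom p R a)).mp (RingHom.mem_ker.mpr h1)
    have h4 := alpha_span_to_I p R hsurj ν a (span_of_coeff p R ν _ h2)
    rw [← ha, Ideal.Quotient.eq_zero_iff_mem]
    exact h4
  exact Subtype.ext (funext hν)

theorem psi_surj (hsurj : Function.Surjective fun x : R => x ^ p) :
    Function.Surjective (psi p R) := by
  intro w
  choose a ha using fun ν => approx p R ν w
  have hcompat : ∀ ⦃m ν : ℕ⦄ (h : m ≤ ν),
      Ideal.Quotient.factor (Ideal.pow_le_pow_right h)
        (Ideal.Quotient.mk ((Iid R) ^ ν) (a ν)) = Ideal.Quotient.mk ((Iid R) ^ m) (a m) := by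
    intro m ν h
    rw [Ideal.Quotient.factor_mk, Ideal.Quotient.mk_eq_mk_iff_sub_mem]
    refine alpha_span_to_I p R hsurj m _ ?_
    have hle : Ideal.span {(p : WittVector p R) ^ ν} ≤ Ideal.span {(p : WittVector p R) ^ m} :=
      Ideal.span_singleton_le_span_singleton.mpr (pow_dvd_pow _ h)
    have h2 := Submodule.sub_mem _ (hle (ha ν)) (ha m)
    rw [map_sub]
    simpa using h2
  set x : CR R := ⟨fun ν => Ideal.Quotient.mk ((Iid R) ^ ν) (a ν), hcompat⟩ with hxdef
  refine ⟨x, ?_⟩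
  have htr : ∀ ν : ℕ, WittVector.truncate ν (psi p R x - w) = 0 := by
    intro ν
    have h1 : WittVector.truncate ν (psi p R x) = WittVector.truncate ν (alphaHom p R (a ν)) := by
      rw [trunc_psi p R ν x]
      exact fC_eval p R ν x (a ν) rfl
    rw [map_sub, h1, ← map_sub, ← RingHom.mem_ker, WittVector.mem_ker_truncate]
    exact coeff_of_mem_span p R ν _ (ha ν)
  have hz : psi p R x - w = 0 := by
    ext n
    rw [WittVector.zero_coeff]
    exact (WittVector.mem_ker_truncate (n + 1) _).mp (RingHom.mem_ker.mpr (htr (n + 1))) n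
      (Nat.lt_succ_self n)
  exact sub_eq_zero.mp hz

theorem iter_pow_frob (n : ℕ) (r : R) :
    ((frobeniusEquiv R p).symm)^[n] r ^ p ^ n = r := by
  induction n generalizing r with
  | zero => simp
  | succ n ih =>
      rw [Function.iterate_succ_apply, pow_succ, pow_mul,
        ih ((frobeniusEquiv R p).symm r), ← frobenius_def]
      exact frobenius_apply_frobeniusEquiv_symm R p r

theorem endo_id (g : WittVector p R →+* WittVector p R)
    (hg : ∀ w, (g w).coeff 0 = w.coeff 0) (w : WittVector p R) : g w = w := by
  have hteich : ∀ r : R, g (teichmuller p r) = teichmuller p r := by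
    intro r
    rw [← sub_eq_zero]
    refine sepW p R _ fun ν => ?_
    cases ν with
    | zero => rw [pow_zero, Ideal.span_singleton_one]; exact Submodule.mem_top
    | succ n =>
        set s := ((frobeniusEquiv R p).symm)^[n] r with hs
        have hsr : teichmuller p s ^ p ^ n = teichmuller p r := by
          rw [← map_pow, iter_pow_frob]
        have h1 : g (teichmuller p s) - teichmuller p s ∈
            Ideal.span {(p : WittVector p R) ^ 1} := by
          rw [pow_one]
          have h0 : (g (teichmuller p s) - teichmuller p s).coeff 0 = 0 := by
            have h2 := map_sub (WittVector.constantCoeff) (g (teichmuller p s)) (teichmuller p s)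
            simp only [WittVector.constantCoeff_apply] at h2
            rw [h2, hg, teichmuller_coeff_zero, sub_self]
          obtain ⟨z, hz⟩ := exists_p_mul p R _ h0
          exact Ideal.mem_span_singleton.mpr ⟨z, hz⟩
        have h3 := pow_p_span_iter p h1 n
        rw [← map_pow g, hsr] at h3
        exact h3
  have key : ∀ ν : ℕ, ∀ w : WittVector p R, g w - w ∈ Ideal.span {(p : WittVector p R) ^ ν} := by
    intro ν
    induction ν with
    | zero => intro w; rw [pow_zero, Ideal.span_singleton_one]; exact Submodule.mem_top
    | succ ν ih =>
        intro w
        obtain ⟨z, hw⟩ := decompW p R w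
        obtain ⟨y, hy⟩ := Ideal.mem_span_singleton.mp (ih z)
        rw [Ideal.mem_span_singleton]
        refine ⟨y, ?_⟩
        have h1 : g w = teichmuller p (w.coeff 0) + (p : WittVector p R) * g z := by
          conv_lhs => rw [hw, map_add, map_mul, map_natCast, hteich]
        have h2 : g z = z + (p : WittVector p R) ^ ν * y := by linear_combination hy
        rw [h1, h2]
        linear_combination -hw
  rw [← sub_eq_zero]
  exact sepW p R _ fun ν => key ν w

end St13

/-- Let `p` be a prime and `R` a perfect `𝔽_p`-algebra. Then there is a
unique ring isomorphism `C(R) ≅ W(R)` onto the ring of `p`-typical Witt vectors of `R`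
commuting with the canonical projections of both rings onto `R` (for `C(R)` the projection
`π̄` induced by `π`, for `W(R)` the zeroth Witt component). -/
theorem statement13 (p : ℕ) [Fact p.Prime] (R : Type*) [CommRing R] [CharP R p]
    (hperf : Function.Bijective fun x : R => x ^ p) :
    ∃! e : CR R ≃+* WittVector p R, ∀ x : CR R, (e x).coeff 0 = CtoR R x := by
  haveI hPR : PerfectRing R p := by
    refine ⟨?_⟩
    have h : ⇑(frobenius R p) = fun x : R => x ^ p := funext fun x : R => frobenius_def p x
    exact hperf
  have hsurj : Function.Surjective fun x : R => x ^ p := hperf.surjective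
  have hbij : Function.Bijective (St13.psi p R) :=
    ⟨St13.psi_inj p R hsurj, St13.psi_surj p R hsurj⟩
  let e : CR R ≃+* WittVector p R := RingEquiv.ofBijective (St13.psi p R) hbij
  have hprop : ∀ x : CR R, (e x).coeff 0 = CtoR R x := by
    intro x
    obtain ⟨a, ha⟩ := Ideal.Quotient.mk_surjective ((x : Π ν : ℕ, ZR R ⧸ (Iid R) ^ ν) 1)
    show (St13.psi p R x).coeff 0 = CtoR R x
    have h1 : WittVector.truncate 1 (St13.psi p R x) =
        WittVector.truncate 1 (St13.alphaHom p R a) := by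
      rw [St13.trunc_psi p R 1 x]
      exact St13.fC_eval p R 1 x a ha
    have h2 : (St13.psi p R x).coeff 0 = (St13.alphaHom p R a).coeff 0 := by
      have h2' := congrArg (fun u => TruncatedWittVector.coeff (⟨0, one_pos⟩ : Fin 1) u) h1
      simpa [WittVector.coeff_truncate] using h2'
    have h3 : CtoR R x = piHom R a := by
      show (Ideal.Quotient.lift (Iid R) (piHom R) (fun _ ha => ha))
          (((Ideal.quotEquivOfEq (pow_one (Iid R))).toRingHom)
            (Ceval (ZR R) (Iid R) 1 x)) = piHom R a
      have hc : Ceval (ZR R) (Iid R) 1 x = Ideal.Quotient.mk ((Iid R) ^ 1) a := ha.symm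
      rw [hc]
      have h4 : (Ideal.quotEquivOfEq (pow_one (Iid R))).toRingHom
          (Ideal.Quotient.mk ((Iid R) ^ 1) a) = Ideal.Quotient.mk (Iid R) a := by
        simpa using Ideal.quotEquivOfEq_mk (pow_one (Iid R)) a
      rw [h4]
      exact Ideal.Quotient.lift_mk _ _ _
    rw [h2, St13.coeff0_alpha, h3]
  refine ⟨e, hprop, ?_⟩
  intro e' he'
  have hgid : ∀ w : WittVector p R, e' (e.symm w) = w := by
    have hg : ∀ w : WittVector p R,
        (((e' : CR R →+* WittVector p R).comp (e.symm : WittVector p R →+* CR R)) w).coeff 0 =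
          w.coeff 0 := by
      intro w
      show (e' (e.symm w)).coeff 0 = w.coeff 0
      rw [he' (e.symm w), ← hprop (e.symm w), RingEquiv.apply_symm_apply]
    intro w
    exact St13.endo_id p R _ hg w
  apply RingEquiv.ext
  intro x
  have h5 := hgid (e x)
  rwa [RingEquiv.symm_apply_apply] at h5
end

section
/- Let p be a prime and R a perfect 𝔽_p-algebra. The natural ring homomorphism from the p-adic completion lim_ν ℤR/p^ν ℤR of ℤR to the I-adic completion C(R) = lim_ν ℤR/I^ν is surjective, and its kernel is the inverse limit lim_ν I^ν/p^ν ℤR (of the images of I^ν in ℤR/p^ν ℤR). -/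
set_option synthInstance.maxHeartbeats 1000000
set_option maxHeartbeats 1000000

open MonoidAlgebra

/-- For ideals `I ≤ J` of `A`, the natural ring homomorphism `lim_ν A/I^ν → lim_ν A/J^ν`. -/
noncomputable def thetaMap (A : Type*) [CommRing A] (I J : Ideal A) (hIJ : I ≤ J) :
    Clim A I →+* Clim A J :=
  RingHom.codRestrict
    ((RingHom.pi fun ν => (Ideal.Quotient.factor (S := I ^ ν) (T := J ^ ν)
        (Ideal.pow_right_mono hIJ ν)).comp (Pi.evalRingHom _ ν)).comp (Clim A I).subtype)
    (Clim A J)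
    (by
      intro x m ν h
      obtain ⟨a, ha⟩ := Ideal.Quotient.mk_surjective ((x : Π ν, A ⧸ I ^ ν) ν)
      have hm : (x : Π ν, A ⧸ I ^ ν) m = Ideal.Quotient.mk _ a := by
        rw [← x.2 h, ← ha, Ideal.Quotient.factor_mk]
      simp only [RingHom.comp_apply, RingHom.pi_apply, Pi.evalRingHom_apply, Subring.coe_subtype]
      rw [← ha, hm, Ideal.Quotient.factor_mk, Ideal.Quotient.factor_mk,
        Ideal.Quotient.factor_mk])

lemma p_mem_Iid (p : ℕ) (R : Type*) [CommRing R] [CharP R p] : (p : ZR R) ∈ Iid R := by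
  have h : piHom R (p : ZR R) = 0 := by
    rw [map_natCast]; exact CharP.cast_eq_zero R p
  exact RingHom.mem_ker.mpr h

lemma spanP_le_Iid (p : ℕ) (R : Type*) [CommRing R] [CharP R p] :
    Ideal.span {(p : ZR R)} ≤ Iid R :=
  (Ideal.span_le).mpr (Set.singleton_subset_iff.mpr (p_mem_Iid p R))


section Aux

variable (R : Type*) [CommRing R]

/-- generating set of `I`. -/
def Tset : Set (ZR R) :=
  insert (MonoidAlgebra.single (0:R) (1:ℤ))
    { x | ∃ a b : R, x = MonoidAlgebra.single a 1 + MonoidAlgebra.single b 1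
      - MonoidAlgebra.single (a+b) 1 }

noncomputable def sigmaHom : R →+* (ZR R ⧸ Ideal.span (Tset R)) where
  toFun a := Ideal.Quotient.mk _ (MonoidAlgebra.single a (1:ℤ))
  map_one' := by
    show Ideal.Quotient.mk _ (MonoidAlgebra.single (1:R) (1:ℤ)) = 1
    rw [← MonoidAlgebra.one_def]; exact map_one _
  map_mul' a b := by
    rw [← map_mul, MonoidAlgebra.single_mul_single, one_mul]
  map_zero' := by
    rw [Ideal.Quotient.eq_zero_iff_mem]
    exact Ideal.subset_span (Or.inl rfl)
  map_add' a b := by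
    rw [eq_comm, ← map_add, Ideal.Quotient.eq]
    exact Ideal.subset_span (Or.inr ⟨a, b, by ring⟩)

lemma mk_eq_sigma_pi (x : ZR R) :
    Ideal.Quotient.mk (Ideal.span (Tset R)) x = sigmaHom R (piHom R x) := by
  induction x using MonoidAlgebra.induction_on with
  | of a =>
    rw [MonoidAlgebra.of_apply]
    show Ideal.Quotient.mk _ (MonoidAlgebra.single a (1:ℤ)) = _
    have h2 : piHom R (MonoidAlgebra.single a (1:ℤ)) = a := by
      simp [piHom, MonoidAlgebra.lift_single]
    rw [h2]; rfl
  | add f g hf hg => rw [map_add, map_add, map_add, hf, hg]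
  | smul r f hf => rw [map_zsmul, map_zsmul, map_zsmul, hf]

lemma Iid_le_span : Iid R ≤ Ideal.span (Tset R) := by
  intro x hx
  have hx0 : piHom R x = 0 := hx
  have h := mk_eq_sigma_pi R x
  rw [hx0, map_zero] at h
  exact (Ideal.Quotient.eq_zero_iff_mem).mp h

noncomputable def epsHom : ZR R →+* ℤ :=
  (MonoidAlgebra.lift ℤ ℤ R 1).toRingHom

variable (p : ℕ)

lemma charP_quot : CharP (ZR R ⧸ Ideal.span {(p : ZR R)}) p := by
  constructor
  intro n
  rw [← map_natCast (Ideal.Quotient.mk (Ideal.span {(p : ZR R)})) n,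
    Ideal.Quotient.eq_zero_iff_mem, Ideal.mem_span_singleton]
  constructor
  · rintro ⟨c, hc⟩
    have h : (n : ℤ) = p * epsHom R c := by
      have := congrArg (epsHom R) hc
      simpa using this
    exact_mod_cast Int.natCast_dvd_natCast.mp ⟨epsHom R c, h⟩
  · rintro ⟨k, rfl⟩
    exact ⟨(k : ZR R), by push_cast; ring⟩

lemma mem_Iid_single (a b : R) :
    MonoidAlgebra.single a (1:ℤ) + MonoidAlgebra.single b 1
      - MonoidAlgebra.single (a+b) 1 ∈ Iid R := by
  show piHom R _ = 0
  rw [map_sub, map_add]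
  simp [piHom, MonoidAlgebra.lift_single]

lemma mem_Iid_zero : MonoidAlgebra.single (0:R) (1:ℤ) ∈ Iid R := by
  show piHom R _ = 0
  simp [piHom, MonoidAlgebra.lift_single]

variable [Fact p.Prime] [CharP R p]

lemma key_lemma (hperf : Function.Bijective fun x : R => x ^ p) :
    Iid R ≤ Ideal.span {(p : ZR R)} ⊔ (Iid R) ^ 2 := by
  refine le_trans (Iid_le_span R) (Ideal.span_le.mpr ?_)
  rintro t (rfl | ⟨a, b, rfl⟩)
  · apply Ideal.mem_sup_right
    have h : (MonoidAlgebra.single (0:R) (1:ℤ)) ^ 2 = MonoidAlgebra.single (0:R) (1:ℤ) := by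
      rw [MonoidAlgebra.single_pow]; norm_num
    rw [← h]
    exact Ideal.pow_mem_pow (mem_Iid_zero R) 2
  · obtain ⟨a', ha'⟩ := hperf.2 a
    obtain ⟨b', hb'⟩ := hperf.2 b
    simp only at ha' hb'
    set h : ZR R := MonoidAlgebra.single a' (1:ℤ) + MonoidAlgebra.single b' 1
      - MonoidAlgebra.single (a'+b') 1 with hh
    have hmem : h ∈ Iid R := mem_Iid_single R a' b'
    have hp2 : h ^ p ∈ (Iid R) ^ 2 := by
      have := Ideal.pow_mem_pow hmem p
      exact Ideal.pow_le_pow_right (Fact.out : p.Prime).two_le this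
    have hcong : MonoidAlgebra.single a (1:ℤ) + MonoidAlgebra.single b 1
        - MonoidAlgebra.single (a+b) 1 - h ^ p ∈ Ideal.span {(p : ZR R)} := by
      rw [← Ideal.Quotient.eq_zero_iff_mem, map_sub, sub_eq_zero]
      haveI := charP_quot R p
      haveI : ExpChar (ZR R ⧸ Ideal.span {(p : ZR R)}) p := ExpChar.prime Fact.out
      set mk := Ideal.Quotient.mk (Ideal.span {(p : ZR R)}) with hmk
      have hf : ∀ x : ZR R, mk (x ^ p) = frobenius _ p (mk x) := by
        intro x; rw [frobenius_def, map_pow]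
      have hs : ∀ c : R, frobenius _ p (mk (MonoidAlgebra.single c (1:ℤ)))
          = mk (MonoidAlgebra.single (c ^ p) (1:ℤ)) := by
        intro c
        rw [frobenius_def, ← map_pow, MonoidAlgebra.single_pow, one_pow]
      rw [hf, hh, map_sub, map_add, map_sub, map_add, map_sub, map_add, hs, hs, hs, ha', hb']
      have h3 : (a' + b') ^ p = a + b := by rw [add_pow_char, ha', hb']
      rw [h3]
    have hsplit : MonoidAlgebra.single a (1:ℤ) + MonoidAlgebra.single b 1
        - MonoidAlgebra.single (a+b) 1
        = (MonoidAlgebra.single a (1:ℤ) + MonoidAlgebra.single b 1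
        - MonoidAlgebra.single (a+b) 1 - h ^ p) + h ^ p := by ring
    rw [hsplit]
    exact Ideal.add_mem _ (Ideal.mem_sup_left hcong) (Ideal.mem_sup_right hp2)

lemma Iid_le_sup_pow (hperf : Function.Bijective fun x : R => x ^ p) :
    ∀ N : ℕ, Iid R ≤ Ideal.span {(p : ZR R)} ⊔ (Iid R) ^ (N + 1) := by
  intro N
  induction N with
  | zero => rw [pow_one]; exact le_sup_right
  | succ N ih =>
    refine le_trans ih (sup_le le_sup_left ?_)
    have h1 : (Iid R) ^ (N + 1) = (Iid R) ^ N * Iid R := by ring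
    rw [h1]
    refine le_trans (Ideal.mul_mono le_rfl (key_lemma R p hperf)) ?_
    rw [Ideal.mul_sup]
    refine sup_le (le_trans Ideal.mul_le_right le_sup_left) ?_
    have h2 : (Iid R) ^ N * (Iid R) ^ 2 = (Iid R) ^ (N + 2) := by ring
    rw [h2]
    exact le_sup_right

lemma pow_le_sup_pow (hperf : Function.Bijective fun x : R => x ^ p) (m N : ℕ) :
    (Iid R) ^ m ≤ Ideal.span {(p : ZR R)} ^ m ⊔ (Iid R) ^ N := by
  induction m with
  | zero => rw [pow_zero, pow_zero, Ideal.one_eq_top]; exact le_sup_left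
  | succ m ih =>
    have h1 : (Iid R) ^ (m + 1) = (Iid R) ^ m * Iid R := by ring
    rw [h1]
    refine le_trans (Ideal.mul_mono ih (Iid_le_sup_pow R p hperf N)) ?_
    rw [Ideal.mul_sup, Ideal.sup_mul, Ideal.sup_mul]
    have e1 : Ideal.span {(p : ZR R)} ^ m * Ideal.span {(p : ZR R)}
        = Ideal.span {(p : ZR R)} ^ (m + 1) := by ring
    rw [e1]
    refine sup_le (sup_le le_sup_left ?_) (sup_le ?_ ?_)
    · have h2 : (Iid R) ^ N * Ideal.span {(p : ZR R)} ≤ (Iid R) ^ N :=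
        Ideal.mul_le_left
      exact h2.trans le_sup_right
    · have h2 : Ideal.span {(p : ZR R)} ^ m * (Iid R) ^ (N + 1) ≤ (Iid R) ^ (N + 1) :=
        Ideal.mul_le_right
      exact h2.trans ((Ideal.pow_le_pow_right (Nat.le_succ N)).trans le_sup_right)
    · have h2 : (Iid R) ^ N * (Iid R) ^ (N + 1) ≤ (Iid R) ^ (N + 1) :=
        Ideal.mul_le_right
      exact h2.trans ((Ideal.pow_le_pow_right (Nat.le_succ N)).trans le_sup_right)

end Aux

/-- Let `p` be a prime and `R` a perfect `𝔽_p`-algebra. The natural ring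
homomorphism `θ` from the `p`-adic completion `lim_ν ℤR/p^ν·ℤR` of `ℤR` to the `I`-adic
completion `C(R) = lim_ν ℤR/I^ν` is surjective, and its kernel is the inverse limit
`lim_ν I^ν/p^ν·ℤR`: an element lies in `ker θ` iff each of its components lies in the image
of `I^ν` in `ℤR/p^ν·ℤR`. -/
theorem statement16 (p : ℕ) [Fact p.Prime] (R : Type*) [CommRing R] [CharP R p]
    (hperf : Function.Bijective fun x : R => x ^ p) :
    Function.Surjective (thetaMap (ZR R) (Ideal.span {(p : ZR R)}) (Iid R) (spanP_le_Iid p R)) ∧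
    ∀ x : Clim (ZR R) (Ideal.span {(p : ZR R)}),
      thetaMap (ZR R) (Ideal.span {(p : ZR R)}) (Iid R) (spanP_le_Iid p R) x = 0 ↔
      ∀ ν : ℕ, (x : Π ν : ℕ, ZR R ⧸ (Ideal.span {(p : ZR R)}) ^ ν) ν ∈
        Ideal.map (Ideal.Quotient.mk ((Ideal.span {(p : ZR R)}) ^ ν)) (Iid R ^ ν) := by
  constructor
  · -- surjectivity
    intro y
    have step : ∀ (ν : ℕ) (b : ZR R), Ideal.Quotient.mk ((Iid R) ^ ν) b = y.1 ν →
        ∃ b' : ZR R, Ideal.Quotient.mk ((Iid R) ^ (ν+1)) b' = y.1 (ν+1) ∧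
          b' - b ∈ Ideal.span {(p : ZR R)} ^ ν := by
      intro ν b hb
      obtain ⟨a, ha⟩ := Ideal.Quotient.mk_surjective (y.1 (ν+1))
      have hab : a - b ∈ (Iid R) ^ ν := by
        rw [← Ideal.Quotient.eq, hb]
        rw [← y.2 (Nat.le_succ ν), ← ha, Ideal.Quotient.factor_mk]
      have hmem := pow_le_sup_pow R p hperf ν (ν + 1) hab
      rw [Submodule.mem_sup] at hmem
      obtain ⟨u, hu, v, hv, huv⟩ := hmem
      refine ⟨a - v, ?_, ?_⟩
      · rw [map_sub, ha, (Ideal.Quotient.eq_zero_iff_mem).mpr hv, sub_zero]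
      · have heq : a - v - b = u := by linear_combination -huv
        rw [heq]; exact hu
    have base : Ideal.Quotient.mk ((Iid R) ^ 0) (0 : ZR R) = y.1 0 := by
      obtain ⟨a, ha⟩ := Ideal.Quotient.mk_surjective (y.1 0)
      rw [← ha, Ideal.Quotient.eq]
      simp
    let B : ∀ ν : ℕ, {b : ZR R // Ideal.Quotient.mk ((Iid R) ^ ν) b = y.1 ν} :=
      Nat.rec ⟨0, base⟩ (fun ν ih =>
        ⟨Classical.choose (step ν ih.1 ih.2), (Classical.choose_spec (step ν ih.1 ih.2)).1⟩)
    have hBstep : ∀ ν : ℕ, (B (ν+1)).1 - (B ν).1 ∈ Ideal.span {(p : ZR R)} ^ ν :=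
      fun ν => (Classical.choose_spec (step ν (B ν).1 (B ν).2)).2
    have hB2 : ∀ m ν : ℕ, m ≤ ν → (B ν).1 - (B m).1 ∈ Ideal.span {(p : ZR R)} ^ m := by
      intro m ν h
      induction ν, h using Nat.le_induction with
      | base => simp
      | succ ν hmν ih =>
        have h1 := Ideal.pow_le_pow_right (I := Ideal.span {(p : ZR R)}) hmν (hBstep ν)
        have h2 : (B (ν+1)).1 - (B m).1 = ((B (ν+1)).1 - (B ν).1) + ((B ν).1 - (B m).1) := by
          ring
        rw [h2]
        exact Ideal.add_mem _ h1 ih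
    refine ⟨⟨fun ν => Ideal.Quotient.mk _ (B ν).1, ?_⟩, ?_⟩
    · intro m ν h
      rw [Ideal.Quotient.factor_mk, Ideal.Quotient.eq (I := Ideal.span {(p : ZR R)} ^ m)]
      exact hB2 m ν h
    · apply Subtype.ext
      funext ν
      show Ideal.Quotient.factor (S := Ideal.span {(p : ZR R)} ^ ν) (T := (Iid R) ^ ν)
        (Ideal.pow_right_mono (spanP_le_Iid p R) ν)
        (Ideal.Quotient.mk (Ideal.span {(p : ZR R)} ^ ν) (B ν).1) = y.1 ν
      rw [Ideal.Quotient.factor_mk]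
      exact (B ν).2
  · -- kernel
    intro x
    constructor
    · intro hθ ν
      obtain ⟨a, ha⟩ := Ideal.Quotient.mk_surjective (x.1 ν)
      have h0 : Ideal.Quotient.factor
          (Ideal.pow_right_mono (spanP_le_Iid p R) ν) (x.1 ν) = 0 :=
        congrFun (congrArg Subtype.val hθ) ν
      rw [← ha, Ideal.Quotient.factor_mk, Ideal.Quotient.eq_zero_iff_mem] at h0
      rw [← ha]
      exact Ideal.mem_map_of_mem _ h0
    · intro hmem
      apply Subtype.ext
      funext ν
      show Ideal.Quotient.factor (S := Ideal.span {(p : ZR R)} ^ ν) (T := (Iid R) ^ ν)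
        (Ideal.pow_right_mono (spanP_le_Iid p R) ν) (x.1 ν) = 0
      obtain ⟨a, haI, ha⟩ := (Ideal.mem_map_iff_of_surjective _
        Ideal.Quotient.mk_surjective).mp (hmem ν)
      rw [← ha, Ideal.Quotient.factor_mk, Ideal.Quotient.eq_zero_iff_mem]
      exact haI
end
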